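/- arXiv:2005.10242 — 4 statements merged into one kernel-verified Lean document; each statement's English description precedes it below -/
import Mathlib

section
/- Let d ≥ 1 and t > 0. The uniform probability measure σ_d is the unique Borel probability measure on S^d minimizing the Gaussian energy: for every Borel probability measure μ on S^d, I_{G_t}[μ] ≥ I_{G_t}[σ_d], with equality if and only if μ = σ_d (as measures on the Borel subsets of S^d). -/
open MeasureTheory Real Filter Metric
open scoped RealInnerProductSpace ENNReal Topology BigOperators

noncomputable section

/-- `ℝ^n` as a Euclidean space. -/
abbrev Euc (n : ℕ) : Type := EuclideanSpace ℝ (Fin n)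

/-- The unit sphere in `ℝ^m`; the sphere `S^d` of the informal statement is `Sph (d+1)`. -/
abbrev Sph (m : ℕ) := Metric.sphere (0 : Euc m) 1

/-- The uniform (normalized surface-area) probability measure on the unit sphere of `ℝ^m`. -/
noncomputable def unifSphere (m : ℕ) : Measure (Sph m) :=
  ((volume : Measure (Euc m)).toSphere Set.univ)⁻¹ • (volume : Measure (Euc m)).toSphere

/-- Gaussian energy `I_{G_t}[μ] = ∫∫ exp(−t‖u−v‖²) dμ dμ` of a measure on the sphere. -/
noncomputable def gaussEnergy (t : ℝ) {m : ℕ} (μ : Measure (Sph m)) : ℝ :=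
  ∫ u, ∫ v, Real.exp (-t * ‖(u : Euc m) - (v : Euc m)‖ ^ 2) ∂μ ∂μ

namespace GaussAux

variable {m : ℕ}

lemma contCoord (i : Fin m) : Continuous fun u : Sph m => (u : Euc m) i :=
  (EuclideanSpace.proj (𝕜 := ℝ) i).continuous.comp continuous_subtype_val

lemma abs_coord_le (u : Sph m) (i : Fin m) : |(u : Euc m) i| ≤ 1 := by
  have h := EuclideanSpace.norm_eq (u : Euc m)
  rw [norm_eq_of_mem_sphere] at h
  have h1 : |(u:Euc m) i|^2 ≤ ∑ j, ‖(u:Euc m) j‖^2 := by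
    have := Finset.single_le_sum (f := fun j => ‖(u:Euc m) j‖^2)
      (fun j _ => by positivity) (Finset.mem_univ i)
    simpa [Real.norm_eq_abs] using this
  calc |(u:Euc m) i| = Real.sqrt (|(u:Euc m) i|^2) := by
        rw [Real.sqrt_sq_eq_abs, abs_abs]
    _ ≤ Real.sqrt (∑ j, ‖(u:Euc m) j‖^2) := Real.sqrt_le_sqrt h1
    _ = 1 := by rw [← h]

/-- A monomial function on `ℝ^m`. -/
def mono {n : ℕ} (g : Fin n → Fin m) (x : Euc m) : ℝ := ∏ j, x (g j)

lemma cont_mono {n : ℕ} (g : Fin n → Fin m) :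
    Continuous fun u : Sph m => mono g (u : Euc m) :=
  continuous_finset_prod _ fun j _ => contCoord (g j)

lemma abs_mono_le {n : ℕ} (g : Fin n → Fin m) (u : Sph m) : |mono g (u : Euc m)| ≤ 1 := by
  rw [mono, Finset.abs_prod]
  refine Finset.prod_le_one (fun j _ => abs_nonneg _) (fun j _ => abs_coord_le u (g j))

lemma contIntegrable {X : Type*} [MeasurableSpace X] [TopologicalSpace X] [CompactSpace X]
    [OpensMeasurableSpace X] (μ : Measure X) [IsFiniteMeasure μ] {f : X → ℝ}
    (hf : Continuous f) : Integrable f μ := by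
  exact (BoundedContinuousFunction.mkOfCompact ⟨f, hf⟩).integrable μ

/-- Moment of a measure on the sphere. -/
def mom (μ : Measure (Sph m)) {n : ℕ} (g : Fin n → Fin m) : ℝ :=
  ∫ u, mono g (u : Euc m) ∂μ

lemma abs_mom_le (μ : Measure (Sph m)) [IsProbabilityMeasure μ] {n : ℕ}
    (g : Fin n → Fin m) : |mom μ g| ≤ 1 := by
  have := norm_integral_le_of_norm_le_const (μ := μ)
    (f := fun u : Sph m => mono g (u : Euc m)) (C := 1)
    (Eventually.of_forall fun u => by simpa [Real.norm_eq_abs] using abs_mono_le g u)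
  simpa [mom, Real.norm_eq_abs] using this

/-- Coefficients of the Gaussian kernel expansion. -/
def c (t : ℝ) (n : ℕ) : ℝ := Real.exp (-(2*t)) * ((2*t)^n / n.factorial)

lemma abs_c_le (t : ℝ) (n : ℕ) : |c t n| ≤ Real.exp (-(2*t)) * (|2*t|^n / n.factorial) := by
  rw [c, abs_mul, abs_of_pos (Real.exp_pos _), abs_div, abs_pow]
  simp [Nat.abs_cast, le_refl]

lemma c_pos {t : ℝ} (ht : 0 < t) (n : ℕ) : 0 < c t n := by
  have h2 : (0:ℝ) < 2*t := by linarith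
  have := Real.exp_pos (-(2*t))
  have h3 : (0:ℝ) < (2*t)^n := pow_pos h2 n
  have h4 : (0:ℝ) < (n.factorial : ℝ) := by positivity
  rw [c]; positivity

lemma summable_c_mul (t : ℝ) {Q : ℕ → ℝ} (C : ℝ)
    (hQ : ∀ n, |Q n| ≤ C * (m:ℝ)^n) : Summable fun n => c t n * Q n := by
  refine Summable.of_norm_bounded
    (g := fun n => (Real.exp (-(2*t)) * C) * ((|2*t| * m)^n / n.factorial)) ?_ ?_
  · exact ((Real.summable_pow_div_factorial (|2*t| * m)).mul_left _)
  · intro n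
    have h1 : ‖c t n * Q n‖ ≤ (Real.exp (-(2*t)) * (|2*t|^n / n.factorial)) * (C * (m:ℝ)^n) := by
      rw [Real.norm_eq_abs, abs_mul]
      exact mul_le_mul (abs_c_le t n) (hQ n) (abs_nonneg _)
        (by positivity)
    refine h1.trans (le_of_eq ?_)
    simp only [mul_pow]
    field_simp

end GaussAux

namespace GaussAux
variable {m : ℕ}

lemma kernel_tsum (t : ℝ) (u v : Sph m) :
    Real.exp (-t * ‖(u : Euc m) - (v : Euc m)‖ ^ 2)
      = ∑' n : ℕ, c t n * ⟪(u : Euc m), (v : Euc m)⟫ ^ n := by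
  set s : ℝ := ⟪(u : Euc m), (v : Euc m)⟫ with hs
  have hn : ‖(u:Euc m) - (v:Euc m)‖^2 = 2 - 2 * s := by
    rw [norm_sub_sq_real, norm_eq_of_mem_sphere, norm_eq_of_mem_sphere, hs]; ring
  have h2 : -t * (2 - 2*s) = -(2*t) + (2*t) * s := by ring
  rw [hn, h2, Real.exp_add]
  have h3 : Real.exp ((2*t)*s) = ∑' n : ℕ, ((n.factorial : ℝ))⁻¹ • ((2*t)*s)^n := by
    rw [Real.exp_eq_exp_ℝ, NormedSpace.exp_eq_tsum ℝ]
  rw [h3, ← tsum_mul_left]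
  refine tsum_congr fun n => ?_
  rw [smul_eq_mul, c, mul_pow]
  field_simp

lemma cont_inner_pow (n : ℕ) :
    Continuous fun z : Sph m × Sph m => ⟪(z.1 : Euc m), (z.2 : Euc m)⟫ ^ n := by
  exact (Continuous.inner (continuous_subtype_val.comp continuous_fst)
    (continuous_subtype_val.comp continuous_snd)).pow n

lemma abs_inner_le (z : Sph m × Sph m) : |⟪(z.1 : Euc m), (z.2 : Euc m)⟫| ≤ 1 := by
  have := abs_real_inner_le_norm (z.1 : Euc m) (z.2 : Euc m)
  simpa [norm_eq_of_mem_sphere] using this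

set_option maxHeartbeats 2000000 in
lemma energy_pair (t : ℝ) (μ ν : Measure (Sph m)) [IsProbabilityMeasure μ]
    [IsProbabilityMeasure ν] :
    (∫ u, ∫ v, Real.exp (-t * ‖(u : Euc m) - (v : Euc m)‖ ^ 2) ∂ν ∂μ)
      = ∑' n : ℕ, c t n * ∑ g : Fin n → Fin m, mom μ g * mom ν g := by
  have hKc : Continuous fun z : Sph m × Sph m =>
      Real.exp (-t * ‖(z.1 : Euc m) - (z.2 : Euc m)‖ ^ 2) := by
    apply Real.continuous_exp.comp
    apply Continuous.mul continuous_const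
    exact ((continuous_subtype_val.comp continuous_fst).sub
      (continuous_subtype_val.comp continuous_snd)).norm.pow 2
  have hKint : Integrable (Function.uncurry fun (u v : Sph m) =>
      Real.exp (-t * ‖(u : Euc m) - (v : Euc m)‖ ^ 2)) (μ.prod ν) :=
    contIntegrable _ hKc
  rw [MeasureTheory.integral_integral hKint]
  have hFi : ∀ n : ℕ, Integrable
      (fun z : Sph m × Sph m => c t n * ⟪(z.1 : Euc m), (z.2 : Euc m)⟫ ^ n) (μ.prod ν) :=
    fun n => contIntegrable _ (continuous_const.mul (cont_inner_pow n))
  have hFs : Summable fun n : ℕ =>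
      ∫ z : Sph m × Sph m, ‖c t n * ⟪(z.1 : Euc m), (z.2 : Euc m)⟫ ^ n‖ ∂(μ.prod ν) := by
    refine Summable.of_nonneg_of_le
      (fun n => integral_nonneg fun z => norm_nonneg _)
      (fun n => ?_)
      ((Real.summable_pow_div_factorial (|2*t|)).mul_left (Real.exp (-(2*t))))
    have hb : ∀ z : Sph m × Sph m, ‖c t n * ⟪(z.1 : Euc m), (z.2 : Euc m)⟫ ^ n‖
        ≤ Real.exp (-(2*t)) * (|2*t|^n / n.factorial) := by
      intro z
      rw [Real.norm_eq_abs, abs_mul]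
      calc |c t n| * |⟪(z.1 : Euc m), (z.2 : Euc m)⟫ ^ n|
          ≤ (Real.exp (-(2*t)) * (|2*t|^n / n.factorial)) * 1 := by
            refine mul_le_mul (abs_c_le t n) ?_ (abs_nonneg _) (by positivity)
            rw [abs_pow]
            exact pow_le_one₀ (abs_nonneg _) (abs_inner_le z)
        _ = _ := mul_one _
    calc (∫ z, ‖c t n * ⟪(z.1 : Euc m), (z.2 : Euc m)⟫ ^ n‖ ∂(μ.prod ν))
        ≤ ∫ _z : Sph m × Sph m, Real.exp (-(2*t)) * (|2*t|^n / n.factorial) ∂(μ.prod ν) := by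
          refine integral_mono (hFi n).norm (integrable_const _) hb
      _ = Real.exp (-(2*t)) * (|2*t|^n / n.factorial) := by simp
  calc (∫ z : Sph m × Sph m, Real.exp (-t * ‖(z.1 : Euc m) - (z.2 : Euc m)‖ ^ 2) ∂(μ.prod ν))
      = ∫ z : Sph m × Sph m, ∑' n : ℕ, c t n * ⟪(z.1 : Euc m), (z.2 : Euc m)⟫ ^ n ∂(μ.prod ν) := by
        refine integral_congr_ae (Eventually.of_forall fun z => ?_)
        exact kernel_tsum t z.1 z.2
    _ = ∑' n : ℕ, ∫ z : Sph m × Sph m, c t n * ⟪(z.1 : Euc m), (z.2 : Euc m)⟫ ^ n ∂(μ.prod ν) :=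
        (integral_tsum_of_summable_integral_norm hFi hFs).symm
    _ = ∑' n : ℕ, c t n * ∑ g : Fin n → Fin m, mom μ g * mom ν g := by
        refine tsum_congr fun n => ?_
        rw [integral_const_mul]
        congr 1
        have hinner : ∀ z : Sph m × Sph m, ⟪(z.1 : Euc m), (z.2 : Euc m)⟫ ^ n
            = ∑ g : Fin n → Fin m, mono g (z.1 : Euc m) * mono g (z.2 : Euc m) := by
          intro z
          rw [PiLp.inner_apply]
          simp only [RCLike.inner_apply, RingHom.id_apply, starRingEnd_apply, star_trivial]
          rw [Fintype.sum_pow]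
          refine Finset.sum_congr rfl fun g _ => ?_
          rw [mono, mono, ← Finset.prod_mul_distrib]
          exact Finset.prod_congr rfl fun _ _ => mul_comm _ _
        calc (∫ z : Sph m × Sph m, ⟪(z.1 : Euc m), (z.2 : Euc m)⟫ ^ n ∂(μ.prod ν))
            = ∫ z : Sph m × Sph m, ∑ g : Fin n → Fin m,
                mono g (z.1 : Euc m) * mono g (z.2 : Euc m) ∂(μ.prod ν) := by
              exact integral_congr_ae (Eventually.of_forall fun z => hinner z)
          _ = ∑ g : Fin n → Fin m, ∫ z : Sph m × Sph m,
                mono g (z.1 : Euc m) * mono g (z.2 : Euc m) ∂(μ.prod ν) := by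
              refine integral_finset_sum _ fun g _ => contIntegrable _ ?_
              exact ((cont_mono g).comp continuous_fst).mul ((cont_mono g).comp continuous_snd)
          _ = ∑ g : Fin n → Fin m, mom μ g * mom ν g := by
              refine Finset.sum_congr rfl fun g _ => ?_
              exact integral_prod_mul (μ := μ) (ν := ν)
                (f := fun u : Sph m => mono g (u : Euc m))
                (g := fun v : Sph m => mono g (v : Euc m))

end GaussAux

namespace GaussAux
open scoped Pointwise
variable {m : ℕ}

/-- The map on the sphere induced by a linear isometry equivalence. -/
def sphMap (T : Euc m ≃ₗᵢ[ℝ] Euc m) (u : Sph m) : Sph m :=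
  ⟨T (u : Euc m), by
    rw [mem_sphere_zero_iff_norm, T.norm_map]
    exact norm_eq_of_mem_sphere u⟩

lemma cont_sphMap (T : Euc m ≃ₗᵢ[ℝ] Euc m) : Continuous (sphMap T) :=
  Continuous.subtype_mk (T.continuous.comp continuous_subtype_val) _

lemma map_sphMap_toSphere (T : Euc m ≃ₗᵢ[ℝ] Euc m) :
    Measure.map (sphMap T) (volume : Measure (Euc m)).toSphere
      = (volume : Measure (Euc m)).toSphere := by
  ext s hs
  rw [Measure.map_apply (cont_sphMap T).measurable hs,
    Measure.toSphere_apply' _ hs, Measure.toSphere_apply' _ ((cont_sphMap T).measurable hs)]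
  congr 1
  have himg : Subtype.val '' (sphMap T ⁻¹' s) = ⇑T.symm '' (Subtype.val '' s) := by
    ext x
    constructor
    · rintro ⟨u, hu, rfl⟩
      exact ⟨(sphMap T u : Euc m), ⟨sphMap T u, hu, rfl⟩, by simp [sphMap]⟩
    · rintro ⟨y, ⟨w, hw, rfl⟩, rfl⟩
      have hmem : T.symm (w : Euc m) ∈ Sph m := by
        rw [mem_sphere_zero_iff_norm, T.symm.norm_map]
        exact norm_eq_of_mem_sphere w
      refine ⟨⟨T.symm (w : Euc m), hmem⟩, ?_, rfl⟩
      have heq : sphMap T ⟨T.symm (w : Euc m), hmem⟩ = w := by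
        apply Subtype.ext
        simp [sphMap]
      rw [Set.mem_preimage, heq]
      exact hw
  rw [himg]
  have hsmul : Set.Ioo (0:ℝ) 1 • (⇑T.symm '' (Subtype.val '' s))
      = ⇑T.symm '' (Set.Ioo (0:ℝ) 1 • (Subtype.val '' s)) := by
    set A := Subtype.val '' s
    calc Set.Ioo (0:ℝ) 1 • (⇑T.symm '' A)
        = Set.image2 (· • ·) (Set.Ioo (0:ℝ) 1) (⇑T.symm '' A) := rfl
      _ = Set.image2 (fun (r:ℝ) a => r • T.symm a) (Set.Ioo (0:ℝ) 1) A :=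
          Set.image2_image_right _ _
      _ = Set.image2 (fun (r:ℝ) a => T.symm (r • a)) (Set.Ioo (0:ℝ) 1) A := by
          simp_rw [LinearIsometryEquiv.map_smul]
      _ = ⇑T.symm '' Set.image2 (· • ·) (Set.Ioo (0:ℝ) 1) A := (Set.image_image2 _ _).symm
      _ = ⇑T.symm '' (Set.Ioo (0:ℝ) 1 • A) := rfl
  rw [hsmul]
  set B := Set.Ioo (0:ℝ) 1 • (Subtype.val '' s)
  have hpre : ⇑T.symm '' B = ⇑T ⁻¹' B :=
    congrFun (Set.image_eq_preimage_of_inverse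
      (fun x => T.apply_symm_apply x) (fun x => T.symm_apply_apply x)) B
  rw [hpre]
  let Tm : Euc m ≃ᵐ Euc m := T.toHomeomorph.toMeasurableEquiv
  have hmp : MeasurePreserving (⇑Tm) (volume : Measure (Euc m)) volume :=
    T.measurePreserving
  exact hmp.measure_preimage_equiv B

lemma map_sphMap_unif (T : Euc m ≃ₗᵢ[ℝ] Euc m) :
    Measure.map (sphMap T) (unifSphere m) = unifSphere m := by
  rw [unifSphere, Measure.map_smul, map_sphMap_toSphere]

lemma isProb_unif (hm : 0 < m) : IsProbabilityMeasure (unifSphere m) := by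
  constructor
  rw [unifSphere, Measure.smul_apply, smul_eq_mul]
  refine ENNReal.inv_mul_cancel ?_ (measure_ne_top _ _)
  rw [Measure.toSphere_apply_univ]
  refine mul_ne_zero ?_ ?_
  · simp [finrank_euclideanSpace_fin, hm.ne']
  · exact (measure_ball_pos _ _ one_pos).ne'

lemma potential_eq (t : ℝ) (u₀ u₁ : Sph m) :
    (∫ v, Real.exp (-t * ‖(u₀ : Euc m) - (v : Euc m)‖ ^ 2) ∂(unifSphere m))
      = ∫ v, Real.exp (-t * ‖(u₁ : Euc m) - (v : Euc m)‖ ^ 2) ∂(unifSphere m) := by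
  set T : Euc m ≃ₗᵢ[ℝ] Euc m := Submodule.reflection (ℝ ∙ ((u₀:Euc m) - (u₁:Euc m)))ᗮ
  have hT : T (u₀ : Euc m) = (u₁ : Euc m) :=
    Submodule.reflection_sub (by rw [norm_eq_of_mem_sphere, norm_eq_of_mem_sphere])
  have hmap := map_sphMap_unif T
  calc (∫ v, Real.exp (-t * ‖(u₀ : Euc m) - (v : Euc m)‖ ^ 2) ∂(unifSphere m))
      = ∫ v, Real.exp (-t * ‖(u₁ : Euc m) - (v : Euc m)‖ ^ 2)
          ∂(Measure.map (sphMap T) (unifSphere m)) := by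
        rw [integral_map (cont_sphMap T).measurable.aemeasurable]
        · refine integral_congr_ae (Eventually.of_forall fun v => ?_)
          have : ‖(u₁ : Euc m) - (sphMap T v : Euc m)‖ = ‖(u₀ : Euc m) - (v : Euc m)‖ := by
            have h1 : ((sphMap T v : Sph m) : Euc m) = T (v : Euc m) := rfl
            rw [h1, ← hT, ← T.map_sub, T.norm_map]
          simp only [this]
        · refine Continuous.aestronglyMeasurable ?_
          apply Real.continuous_exp.comp
          exact Continuous.mul continuous_const
            ((continuous_const.sub continuous_subtype_val).norm.pow 2)
    _ = ∫ v, Real.exp (-t * ‖(u₁ : Euc m) - (v : Euc m)‖ ^ 2) ∂(unifSphere m) := by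
        rw [hmap]

def base_pt (hm : 0 < m) : Sph m :=
  ⟨EuclideanSpace.single (⟨0, hm⟩ : Fin m) (1:ℝ), by
    rw [mem_sphere_zero_iff_norm, EuclideanSpace.norm_single]; norm_num⟩

lemma cross_eq (t : ℝ) (hm : 0 < m) (μ : Measure (Sph m)) [IsProbabilityMeasure μ] :
    (∫ u, ∫ v, Real.exp (-t * ‖(u : Euc m) - (v : Euc m)‖ ^ 2) ∂(unifSphere m) ∂μ)
      = ∫ u, ∫ v, Real.exp (-t * ‖(u : Euc m) - (v : Euc m)‖ ^ 2)
          ∂(unifSphere m) ∂(unifSphere m) := by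
  haveI := isProb_unif hm
  set u₀ : Sph m := base_pt hm
  have hconst : ∀ u : Sph m,
      (∫ v, Real.exp (-t * ‖(u : Euc m) - (v : Euc m)‖ ^ 2) ∂(unifSphere m))
        = ∫ v, Real.exp (-t * ‖(u₀ : Euc m) - (v : Euc m)‖ ^ 2) ∂(unifSphere m) :=
    fun u => potential_eq t u u₀
  have h1 : (fun u : Sph m =>
      ∫ v, Real.exp (-t * ‖(u : Euc m) - (v : Euc m)‖ ^ 2) ∂(unifSphere m))
      = fun _ => ∫ v, Real.exp (-t * ‖(u₀ : Euc m) - (v : Euc m)‖ ^ 2) ∂(unifSphere m) :=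
    funext hconst
  rw [h1, integral_const, integral_const]
  simp

end GaussAux

namespace GaussAux
variable {m : ℕ}

/-- Coordinate function as a continuous map on the sphere. -/
def coordCM (i : Fin m) : C(Sph m, ℝ) := ⟨fun u => (u : Euc m) i, contCoord i⟩

lemma monoCM_apply {n : ℕ} (g : Fin n → Fin m) (u : Sph m) :
    (∏ j, coordCM (g j)) u = mono g (u : Euc m) := by
  simp only [mono]
  induction (Finset.univ : Finset (Fin n)) using Finset.cons_induction with
  | empty => simp
  | cons j s hj ih => rw [Finset.prod_cons, Finset.prod_cons, ContinuousMap.mul_apply, ih]; rfl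

lemma closure_mono : ∀ x ∈ Submonoid.closure (Set.range (coordCM (m := m))),
    ∃ n : ℕ, ∃ g : Fin n → Fin m, x = ∏ j, coordCM (g j) := by
  intro x hx
  induction hx using Submonoid.closure_induction with
  | mem x hx =>
      obtain ⟨i, rfl⟩ := hx
      exact ⟨1, fun _ => i, by simp⟩
  | one => exact ⟨0, Fin.elim0, by simp⟩
  | mul x y hx hy ihx ihy =>
      obtain ⟨n, g, rfl⟩ := ihx
      obtain ⟨n', g', rfl⟩ := ihy
      refine ⟨n + n', Fin.append g g', ?_⟩
      rw [Fin.prod_univ_add]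
      congr 1
      · exact (Finset.prod_congr rfl fun j _ => by rw [Fin.append_left]).symm
      · exact (Finset.prod_congr rfl fun j _ => by rw [Fin.append_right]).symm

lemma measure_eq_of_moments (μ ν : Measure (Sph m)) [IsProbabilityMeasure μ]
    [IsProbabilityMeasure ν]
    (h : ∀ (n : ℕ) (g : Fin n → Fin m), mom μ g = mom ν g) : μ = ν := by
  have hint : ∀ (p : C(Sph m, ℝ)) (κ : Measure (Sph m)) [IsProbabilityMeasure κ],
      Integrable (⇑p) κ := fun p κ _ => contIntegrable κ p.continuous
  have hA : ∀ p ∈ Algebra.adjoin ℝ (Set.range (coordCM (m := m))),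
      ∫ x, p x ∂μ = ∫ x, p x ∂ν := by
    intro p hp
    have hp' : p ∈ Submodule.span ℝ
        ((Submonoid.closure (Set.range (coordCM (m := m))) : Submonoid C(Sph m, ℝ)) :
          Set C(Sph m, ℝ)) := by
      rw [← Algebra.adjoin_eq_span]; exact hp
    clear hp
    induction hp' using Submodule.span_induction with
    | mem x hx =>
        obtain ⟨n, g, rfl⟩ := closure_mono x hx
        have h1 : ∀ u : Sph m, (∏ j, coordCM (g j)) u = mono g (u : Euc m) := monoCM_apply g
        simp only [h1]
        exact h n g
    | zero => simp
    | add x y hx hy ihx ihy =>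
        simp only [ContinuousMap.add_apply]
        rw [integral_add (hint x μ) (hint y μ), integral_add (hint x ν) (hint y ν), ihx, ihy]
    | smul a x hx ih =>
        simp only [ContinuousMap.smul_apply, smul_eq_mul]
        rw [integral_const_mul, integral_const_mul, ih]
  have hsep : (Algebra.adjoin ℝ (Set.range (coordCM (m := m)))).SeparatesPoints := by
    intro x y hxy
    have hne : (x : Euc m) ≠ (y : Euc m) := fun h' => hxy (Subtype.ext h')
    obtain ⟨i, hi⟩ : ∃ i, (x : Euc m) i ≠ (y : Euc m) i := by
      by_contra hc; push_neg at hc; exact hne (PiLp.ext hc)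
    exact ⟨⇑(coordCM i), ⟨coordCM i, Algebra.subset_adjoin ⟨i, rfl⟩, rfl⟩, hi⟩
  have hC : ∀ f : C(Sph m, ℝ), ∫ x, f x ∂μ = ∫ x, f x ∂ν := by
    intro f
    by_contra hne
    set δ := |(∫ x, f x ∂μ) - ∫ x, f x ∂ν| with hδ
    have hδpos : 0 < δ := abs_pos.mpr (sub_ne_zero.mpr hne)
    obtain ⟨g, hg⟩ := ContinuousMap.exists_mem_subalgebra_near_continuousMap_of_separatesPoints
      _ hsep f (δ/3) (by linarith)
    have hgeq : ∫ x, (g : C(Sph m, ℝ)) x ∂μ = ∫ x, (g : C(Sph m, ℝ)) x ∂ν := hA _ g.2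
    have hb : ∀ (κ : Measure (Sph m)) [IsProbabilityMeasure κ],
        |(∫ x, f x ∂κ) - ∫ x, (g : C(Sph m, ℝ)) x ∂κ| ≤ δ/3 := by
      intro κ _
      rw [← integral_sub (hint f κ) (hint _ κ)]
      have := norm_integral_le_of_norm_le_const (μ := κ) (C := δ/3)
        (f := fun x => f x - (g : C(Sph m, ℝ)) x)
        (Eventually.of_forall fun x => ?_)
      · simpa [Real.norm_eq_abs] using this
      · have h1 : ‖f x - (g : C(Sph m, ℝ)) x‖ = ‖((g : C(Sph m, ℝ)) - f) x‖ := by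
          rw [ContinuousMap.sub_apply, norm_sub_rev]
        rw [h1]
        exact (ContinuousMap.norm_coe_le_norm _ x).trans hg.le
    have h1 := hb μ
    have h2 := hb ν
    have h3 := abs_sub_abs_le_abs_sub ((∫ x, f x ∂μ) - ∫ x, f x ∂ν) 0
    have htri : δ ≤ δ/3 + δ/3 := by
      have := abs_sub_le ((∫ x, f x ∂μ)) ((∫ x, (g : C(Sph m, ℝ)) x ∂μ)) ((∫ x, f x ∂ν))
      have h4 : |(∫ x, (g : C(Sph m, ℝ)) x ∂μ) - ∫ x, f x ∂ν|
          = |(∫ x, f x ∂ν) - ∫ x, (g : C(Sph m, ℝ)) x ∂ν| := by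
        rw [hgeq, abs_sub_comm]
      calc δ ≤ |(∫ x, f x ∂μ) - ∫ x, (g : C(Sph m, ℝ)) x ∂μ|
            + |(∫ x, (g : C(Sph m, ℝ)) x ∂μ) - ∫ x, f x ∂ν| := this
        _ ≤ δ/3 + δ/3 := by rw [h4]; exact add_le_add h1 h2
    linarith
  refine ext_of_forall_lintegral_eq_of_IsFiniteMeasure fun f => ?_
  have hcont : Continuous fun x : Sph m => ((f x : ℝ)) :=
    NNReal.continuous_coe.comp f.continuous
  rw [lintegral_coe_eq_integral _ (contIntegrable μ hcont),
    lintegral_coe_eq_integral _ (contIntegrable ν hcont)]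
  exact congrArg ENNReal.ofReal (hC ⟨fun x => (f x : ℝ), hcont⟩)

end GaussAux

/-- For `d ≥ 1` and `t > 0`, the uniform probability measure `σ_d` on `S^d`
is the unique Borel probability measure minimizing the Gaussian energy `I_{G_t}`. -/
theorem uniform_unique_gaussEnergy_minimizer (d : ℕ) (hd : 1 ≤ d) (t : ℝ) (ht : 0 < t)
    (μ : Measure (Sph (d + 1))) [IsProbabilityMeasure μ] :
    gaussEnergy t (unifSphere (d + 1)) ≤ gaussEnergy t μ ∧
      (gaussEnergy t μ = gaussEnergy t (unifSphere (d + 1)) ↔ μ = unifSphere (d + 1)) := by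
  classical
  haveI hσP : IsProbabilityMeasure (unifSphere (d + 1)) := GaussAux.isProb_unif d.succ_pos
  set σ : Measure (Sph (d + 1)) := unifSphere (d + 1) with hσ
  -- bound on the moment sums
  have habs : ∀ (P R : Measure (Sph (d + 1))) [IsProbabilityMeasure P] [IsProbabilityMeasure R]
      (n : ℕ), |∑ g : Fin n → Fin (d + 1), GaussAux.mom P g * GaussAux.mom R g| ≤ 1 * ((d + 1 : ℕ):ℝ)^n := by
    intro P R _ _ n
    calc |∑ g : Fin n → Fin (d + 1), GaussAux.mom P g * GaussAux.mom R g|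
        ≤ ∑ g : Fin n → Fin (d + 1), |GaussAux.mom P g * GaussAux.mom R g| :=
          Finset.abs_sum_le_sum_abs _ _
      _ ≤ ∑ _g : Fin n → Fin (d + 1), (1:ℝ) := by
          refine Finset.sum_le_sum fun g _ => ?_
          rw [abs_mul]
          exact mul_le_one₀ (GaussAux.abs_mom_le P g) (abs_nonneg _) (GaussAux.abs_mom_le R g)
      _ = 1 * ((d + 1 : ℕ):ℝ)^n := by
          rw [Finset.sum_const, Finset.card_univ, Fintype.card_fun]
          simp [Fintype.card_fin]
  have hs1 : Summable fun n : ℕ => GaussAux.c t n *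
      ∑ g : Fin n → Fin (d + 1), GaussAux.mom μ g * GaussAux.mom μ g :=
    GaussAux.summable_c_mul t 1 (habs μ μ)
  have hs2 : Summable fun n : ℕ => GaussAux.c t n *
      ∑ g : Fin n → Fin (d + 1), GaussAux.mom μ g * GaussAux.mom σ g :=
    GaussAux.summable_c_mul t 1 (habs μ σ)
  have hs3 : Summable fun n : ℕ => GaussAux.c t n *
      ∑ g : Fin n → Fin (d + 1), GaussAux.mom σ g * GaussAux.mom σ g :=
    GaussAux.summable_c_mul t 1 (habs σ σ)
  have e1 := GaussAux.energy_pair t μ μ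
  have e2 := GaussAux.energy_pair t μ σ
  have e3 := GaussAux.energy_pair t σ σ
  have hcross := GaussAux.cross_eq t d.succ_pos μ
  have hEμ : gaussEnergy t μ = ∑' n : ℕ, GaussAux.c t n *
      ∑ g : Fin n → Fin (d + 1), GaussAux.mom μ g * GaussAux.mom μ g := by
    rw [gaussEnergy]; exact e1
  have hEσ : gaussEnergy t σ = ∑' n : ℕ, GaussAux.c t n *
      ∑ g : Fin n → Fin (d + 1), GaussAux.mom σ g * GaussAux.mom σ g := by
    rw [gaussEnergy]; exact e3
  have h23 : (∑' n : ℕ, GaussAux.c t n *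
        ∑ g : Fin n → Fin (d + 1), GaussAux.mom μ g * GaussAux.mom σ g)
      = ∑' n : ℕ, GaussAux.c t n *
        ∑ g : Fin n → Fin (d + 1), GaussAux.mom σ g * GaussAux.mom σ g :=
    e2.symm.trans (hcross.trans e3)
  have hdiff : gaussEnergy t μ - gaussEnergy t σ
      = ∑' n : ℕ, GaussAux.c t n *
          ∑ g : Fin n → Fin (d + 1), (GaussAux.mom μ g - GaussAux.mom σ g)^2 := by
    have key : gaussEnergy t μ - gaussEnergy t σ
        = (∑' n : ℕ, GaussAux.c t n *
            ∑ g : Fin n → Fin (d + 1), GaussAux.mom μ g * GaussAux.mom μ g)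
          - 2 * (∑' n : ℕ, GaussAux.c t n *
            ∑ g : Fin n → Fin (d + 1), GaussAux.mom μ g * GaussAux.mom σ g)
          + ∑' n : ℕ, GaussAux.c t n *
            ∑ g : Fin n → Fin (d + 1), GaussAux.mom σ g * GaussAux.mom σ g := by
      rw [hEμ, hEσ, h23]; ring
    rw [key, ← tsum_mul_left (a := (2:ℝ)), ← hs1.tsum_sub (hs2.mul_left 2),
      ← ((hs1.sub (hs2.mul_left 2))).tsum_add hs3]
    refine tsum_congr fun n => ?_
    have hQ : ∑ g : Fin n → Fin (d + 1), (GaussAux.mom μ g - GaussAux.mom σ g)^2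
        = (∑ g : Fin n → Fin (d + 1), GaussAux.mom μ g * GaussAux.mom μ g)
          - 2 * (∑ g : Fin n → Fin (d + 1), GaussAux.mom μ g * GaussAux.mom σ g)
          + ∑ g : Fin n → Fin (d + 1), GaussAux.mom σ g * GaussAux.mom σ g := by
      rw [Finset.mul_sum, ← Finset.sum_sub_distrib, ← Finset.sum_add_distrib]
      exact Finset.sum_congr rfl fun g _ => by ring
    rw [hQ]; ring
  have hSnn : ∀ n : ℕ, 0 ≤ GaussAux.c t n *
      ∑ g : Fin n → Fin (d + 1), (GaussAux.mom μ g - GaussAux.mom σ g)^2 :=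
    fun n => mul_nonneg (GaussAux.c_pos ht n).le
      (Finset.sum_nonneg fun g _ => sq_nonneg _)
  have hle : gaussEnergy t σ ≤ gaussEnergy t μ := by
    have h0 : 0 ≤ gaussEnergy t μ - gaussEnergy t σ := by
      rw [hdiff]; exact tsum_nonneg hSnn
    linarith
  refine ⟨hle, ?_, ?_⟩
  · intro heq
    have hSsum : Summable fun n : ℕ => GaussAux.c t n *
        ∑ g : Fin n → Fin (d + 1), (GaussAux.mom μ g - GaussAux.mom σ g)^2 := by
      refine GaussAux.summable_c_mul (m := d + 1) t 4 fun n => ?_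
      calc |∑ g : Fin n → Fin (d + 1), (GaussAux.mom μ g - GaussAux.mom σ g)^2|
          ≤ ∑ g : Fin n → Fin (d + 1), |(GaussAux.mom μ g - GaussAux.mom σ g)^2| :=
            Finset.abs_sum_le_sum_abs _ _
        _ ≤ ∑ _g : Fin n → Fin (d + 1), (4:ℝ) := by
            refine Finset.sum_le_sum fun g _ => ?_
            have ha := abs_le.mp (GaussAux.abs_mom_le μ g)
            have hb := abs_le.mp (GaussAux.abs_mom_le σ g)
            rw [abs_of_nonneg (sq_nonneg _)]
            nlinarith [ha.1, ha.2, hb.1, hb.2]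
        _ = 4 * ((d + 1 : ℕ):ℝ)^n := by
            rw [Finset.sum_const, Finset.card_univ, Fintype.card_fun]
            simp [Fintype.card_fin]; ring
    have hzero : (∑' n : ℕ, GaussAux.c t n *
        ∑ g : Fin n → Fin (d + 1), (GaussAux.mom μ g - GaussAux.mom σ g)^2) = 0 := by
      rw [← hdiff, heq]; ring
    have h0 : (fun n : ℕ => GaussAux.c t n *
        ∑ g : Fin n → Fin (d + 1), (GaussAux.mom μ g - GaussAux.mom σ g)^2) = 0 := by
      refine (hasSum_zero_iff_of_nonneg (L := SummationFilter.unconditional ℕ) hSnn).mp ?_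
      have := hSsum.hasSum
      rwa [hzero] at this
    have hmomeq : ∀ (n : ℕ) (g : Fin n → Fin (d + 1)), GaussAux.mom μ g = GaussAux.mom σ g := by
      intro n g
      have hn := congrFun h0 n
      simp only [Pi.zero_apply] at hn
      have hsum0 : ∑ g : Fin n → Fin (d + 1), (GaussAux.mom μ g - GaussAux.mom σ g)^2 = 0 := by
        rcases mul_eq_zero.mp hn with h | h
        · exact absurd h (GaussAux.c_pos ht n).ne'
        · exact h
      have := (Finset.sum_eq_zero_iff_of_nonneg
        (fun g _ => sq_nonneg (GaussAux.mom μ g - GaussAux.mom σ g))).mp hsum0 g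
        (Finset.mem_univ g)
      have := sq_eq_zero_iff.mp this
      linarith [this]
    exact GaussAux.measure_eq_of_moments μ σ hmomeq
  · intro h; rw [h]
end
end

section
/- Let d ≥ 1 and t > 0. For each N ≥ 1, let u*_N = (u*_{N,1}, …, u*_{N,N}) ∈ (S^d)^N be a configuration minimizing Σ_{1 ≤ i < j ≤ N} G_t(u_i, u_j) over all N-point configurations (u_1, …, u_N) ∈ (S^d)^N. Then the normalized counting measures μ_N = (1/N) Σ_{i=1}^N δ_{u*_{N,i}} converge weak* to σ_d as N → ∞, i.e., for every continuous function h : S^d → ℝ, ∫ h dμ_N → ∫ h dσ_d. -/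
open MeasureTheory Real Filter Metric
open scoped RealInnerProductSpace ENNReal Topology BigOperators Pointwise

noncomputable section

namespace SphProof

variable {m : ℕ}

lemma norm_coe (x : Sph m) : ‖(x : Euc m)‖ = 1 := by
  have := x.2
  rwa [mem_sphere_iff_norm, sub_zero] at this

lemma nontrivial_euc (hm : 0 < m) : Nontrivial (Euc m) := by
  refine nontrivial_of_ne (EuclideanSpace.single ⟨0, hm⟩ (1:ℝ)) 0 ?_
  intro h
  have : ‖EuclideanSpace.single (⟨0, hm⟩ : Fin m) (1:ℝ)‖ = 1 := by
    simp [EuclideanSpace.norm_single]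
  rw [h] at this
  simp at this

lemma toSphere_univ_ne_zero (hm : 0 < m) :
    (volume : Measure (Euc m)).toSphere Set.univ ≠ 0 := by
  haveI := nontrivial_euc hm
  rw [Measure.toSphere_apply_univ]
  refine (ENNReal.mul_pos ?_ (measure_ball_pos _ _ one_pos).ne').ne'
  simp [finrank_euclideanSpace_fin, hm.ne']

lemma isProb (hm : 0 < m) : IsProbabilityMeasure (unifSphere m) := by
  constructor
  rw [unifSphere, Measure.smul_apply, smul_eq_mul,
    ENNReal.inv_mul_cancel (toSphere_univ_ne_zero hm) (measure_ne_top _ _)]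

/-- The Gaussian kernel on the sphere. -/
def Kt (t : ℝ) (x y : Sph m) : ℝ := rexp (-t * ‖(x : Euc m) - (y : Euc m)‖ ^ 2)

lemma Kt_symm (t : ℝ) (x y : Sph m) : Kt t x y = Kt t y x := by
  unfold Kt; rw [norm_sub_rev]

lemma Kt_self (t : ℝ) (x : Sph m) : Kt t x x = 1 := by
  simp [Kt]

lemma Kt_nonneg (t : ℝ) (x y : Sph m) : 0 ≤ Kt t x y := (Real.exp_pos _).le

lemma Kt_cont (t : ℝ) (y : Sph m) : Continuous fun z : Sph m => Kt t y z := by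
  unfold Kt
  exact Real.continuous_exp.comp (continuous_const.mul
    (((continuous_const.sub continuous_subtype_val).norm).pow 2))

lemma Kt_cont' (t : ℝ) (y : Sph m) : Continuous fun z : Sph m => Kt t z y := by
  unfold Kt
  exact Real.continuous_exp.comp (continuous_const.mul
    (((continuous_subtype_val.sub continuous_const).norm).pow 2))

/-- The sphere self-map induced by a linear isometry. -/
def sphMap (e : Euc m ≃ₗᵢ[ℝ] Euc m) (x : Sph m) : Sph m :=
  ⟨e x, by
    rw [mem_sphere_iff_norm, sub_zero, e.norm_map, norm_coe]⟩

lemma sphMap_cont (e : Euc m ≃ₗᵢ[ℝ] Euc m) : Continuous (sphMap e) :=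
  (e.continuous.comp continuous_subtype_val).subtype_mk _

lemma map_toSphere (e : Euc m ≃ₗᵢ[ℝ] Euc m) :
    Measure.map (sphMap e) ((volume : Measure (Euc m)).toSphere)
      = (volume : Measure (Euc m)).toSphere := by
  have hcont := sphMap_cont e
  ext s hs
  rw [Measure.map_apply hcont.measurable hs,
      Measure.toSphere_apply' _ (hcont.measurable hs),
      Measure.toSphere_apply' _ hs]
  congr 1
  have h1 : (Subtype.val '' (sphMap e ⁻¹' s)) = ⇑e ⁻¹' (Subtype.val '' s) := by
    ext z
    constructor
    · rintro ⟨p, hp, rfl⟩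
      exact ⟨sphMap e p, hp, rfl⟩
    · rintro ⟨q, hq, hqz⟩
      have hz : z ∈ Metric.sphere (0 : Euc m) 1 := by
        rw [mem_sphere_iff_norm, sub_zero, ← e.norm_map z, ← hqz, norm_coe]
      refine ⟨⟨z, hz⟩, ?_, rfl⟩
      show sphMap e ⟨z, hz⟩ ∈ s
      have : sphMap e ⟨z, hz⟩ = q := Subtype.ext hqz.symm
      rwa [this]
  have h2 : (Set.Ioo (0:ℝ) 1) • (⇑e ⁻¹' (Subtype.val '' s))
      = ⇑e ⁻¹' ((Set.Ioo (0:ℝ) 1) • (Subtype.val '' s)) := by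
    ext z
    constructor
    · rintro ⟨r, hr, a, ha, rfl⟩
      exact ⟨r, hr, e a, ha, (e.map_smul r a).symm⟩
    · rintro ⟨r, hr, a, ha, hra⟩
      refine ⟨r, hr, e.symm a, by simpa using ha, ?_⟩
      apply e.injective
      rw [e.map_smul, e.apply_symm_apply]
      exact hra
  rw [h1, h2]
  exact (e.measurePreserving).measure_preimage_emb
    (e.toHomeomorph.measurableEmbedding) _

lemma map_unifSphere (e : Euc m ≃ₗᵢ[ℝ] Euc m) :
    Measure.map (sphMap e) (unifSphere m) = unifSphere m := by
  unfold unifSphere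
  rw [Measure.map_smul, map_toSphere]

/-- The potential of the uniform measure. -/
def Fpot (t : ℝ) (y : Sph m) : ℝ := ∫ z, Kt t y z ∂(unifSphere m)

lemma Fpot_const (t : ℝ) (x y : Sph m) : Fpot t x = Fpot t y := by
  set e : Euc m ≃ₗᵢ[ℝ] Euc m := Submodule.reflection (ℝ ∙ ((x : Euc m) - (y : Euc m)))ᗮ with he_def
  have he : e (x : Euc m) = (y : Euc m) := Submodule.reflection_sub (by rw [norm_coe, norm_coe])
  have hpt : ∀ z : Sph m, Kt t y (sphMap e z) = Kt t x z := by
    intro z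
    have hnorm : ‖(y : Euc m) - ((sphMap e z : Sph m) : Euc m)‖
        = ‖(x : Euc m) - (z : Euc m)‖ := by
      rw [show ((sphMap e z : Sph m) : Euc m) = e (z : Euc m) from rfl, ← he,
        ← e.map_sub, e.norm_map]
    unfold Kt
    rw [hnorm]
  have hmap := map_unifSphere e
  calc Fpot t x = ∫ z, Kt t y (sphMap e z) ∂(unifSphere m) :=
        integral_congr_ae (Eventually.of_forall fun z => (hpt z).symm)
    _ = ∫ w, Kt t y w ∂(Measure.map (sphMap e) (unifSphere m)) :=
        (integral_map (sphMap_cont e).aemeasurable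
          ((Kt_cont t y).aestronglyMeasurable)).symm
    _ = Fpot t y := by rw [hmap]; rfl

lemma Fpot_nonneg (t : ℝ) (y : Sph m) : 0 ≤ Fpot t y :=
  integral_nonneg fun z => Kt_nonneg t y z

/-- The energy of the uniform measure. -/
def Ct (m : ℕ) (t : ℝ) : ℝ := ∫ x, Fpot t x ∂(unifSphere m)

lemma Fpot_eq_Ct (hm : 0 < m) (t : ℝ) (y : Sph m) : Fpot t y = Ct m t := by
  haveI := isProb hm
  have : ∀ x : Sph m, Fpot t x = Fpot t y := fun x => Fpot_const t x y
  rw [Ct, integral_congr_ae (Eventually.of_forall this), integral_const]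
  simp

lemma sph_nonempty (hm : 0 < m) : Nonempty (Sph m) :=
  ⟨⟨EuclideanSpace.single ⟨0, hm⟩ 1, by
    simp [mem_sphere_iff_norm, EuclideanSpace.norm_single]⟩⟩

lemma Ct_nonneg (hm : 0 < m) (t : ℝ) : 0 ≤ Ct m t := by
  obtain ⟨x⟩ := sph_nonempty hm
  rw [← Fpot_eq_Ct hm t x]
  exact Fpot_nonneg t x


/-! ### Monomial feature expansion of the Gaussian kernel -/

/-- Index type for monomial features. -/
abbrev Idx (m : ℕ) : Type := Σ n : ℕ, Fin n → Fin m

/-- Monomial feature. -/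
def phi (i : Idx m) (x : Sph m) : ℝ := ∏ j : Fin i.1, (x : Euc m) (i.2 j)

/-- Weights. -/
def wt (t : ℝ) (i : Idx m) : ℝ := rexp (-(2 * t)) * (2 * t) ^ i.1 / (Nat.factorial i.1)

variable {t : ℝ}

lemma phi_cont (i : Idx m) : Continuous (phi i) := by
  unfold phi
  refine continuous_finset_prod _ fun j _ => ?_
  exact ((EuclideanSpace.proj (i.2 j)).continuous).comp continuous_subtype_val

lemma coord_abs_le (x : Sph m) (k : Fin m) : |(x : Euc m) k| ≤ 1 := by
  have h1 : |(x : Euc m) k| ≤ ‖(x : Euc m)‖ := by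
    rw [EuclideanSpace.norm_eq]
    have h2 : |(x : Euc m) k| = Real.sqrt (‖(x : Euc m) k‖ ^ 2) := by
      rw [Real.sqrt_sq_eq_abs, Real.norm_eq_abs, abs_abs]
    rw [h2]
    apply Real.sqrt_le_sqrt
    exact Finset.single_le_sum (f := fun j => ‖(x : Euc m) j‖ ^ 2)
      (fun j _ => sq_nonneg _) (Finset.mem_univ k)
  rw [norm_coe x] at h1; exact h1

lemma phi_abs_le (i : Idx m) (x : Sph m) : |phi i x| ≤ 1 := by
  unfold phi
  rw [Finset.abs_prod]
  exact Finset.prod_le_one (fun j _ => abs_nonneg _) (fun j _ => coord_abs_le x (i.2 j))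

lemma wt_pos (ht : 0 < t) (i : Idx m) : 0 < wt t i := by
  unfold wt
  have h2 : (0:ℝ) < 2 * t := by linarith
  positivity

lemma summable_wt (ht : 0 < t) : Summable (wt (m := m) t) := by
  have hnn : ∀ i : Idx m, 0 ≤ wt t i := fun i => (wt_pos ht i).le
  rw [summable_sigma_of_nonneg hnn]
  constructor
  · intro n
    exact (hasSum_fintype _).summable
  · have heq : (fun n : ℕ => ∑' k : Fin n → Fin m, wt t ⟨n, k⟩)
        = fun n : ℕ => rexp (-(2 * t)) * ((2 * t * m) ^ n / n.factorial) := by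
      funext n
      rw [tsum_fintype]
      have : ∀ k : Fin n → Fin m, wt t ⟨n, k⟩
          = rexp (-(2 * t)) * (2 * t) ^ n / n.factorial := fun _ => rfl
      rw [Finset.sum_congr rfl fun k _ => this k, Finset.sum_const, Finset.card_univ]
      have hcard : Fintype.card (Fin n → Fin m) = m ^ n := by simp
      rw [hcard, nsmul_eq_mul]
      push_cast
      rw [mul_pow]
      ring
    rw [heq]
    exact (Real.summable_pow_div_factorial (2 * t * m)).mul_left _

lemma summable_wt_mul (ht : 0 < t) {g : Idx m → ℝ} (C : ℝ)
    (hg : ∀ i, |g i| ≤ C) : Summable fun i => wt t i * g i := by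
  refine Summable.of_norm_bounded ((summable_wt ht).mul_right C) ?_
  intro i
  rw [Real.norm_eq_abs, abs_mul, abs_of_pos (wt_pos ht i)]
  exact mul_le_mul_of_nonneg_left (hg i) (wt_pos ht i).le

lemma rexp_eq_tsum (a : ℝ) : rexp a = ∑' n : ℕ, a ^ n / n.factorial := by
  rw [Real.exp_eq_exp_ℝ, NormedSpace.exp_eq_tsum_div]

lemma inner_coe (x y : Sph m) :
    ⟪(x : Euc m), (y : Euc m)⟫ = ∑ k, (x : Euc m) k * (y : Euc m) k := by
  simp [PiLp.inner_apply, RCLike.inner_apply, conj_trivial, mul_comm]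

/-- The expansion of the Gaussian kernel into monomial features. -/
lemma Kt_eq_tsum (ht : 0 < t) (x y : Sph m) :
    Kt t x y = ∑' i : Idx m, wt t i * (phi i x * phi i y) := by
  have hsum : Summable fun i : Idx m => wt t i * (phi i x * phi i y) := by
    refine summable_wt_mul ht 1 fun i => ?_
    rw [abs_mul]
    exact mul_le_one₀ (phi_abs_le i x) (abs_nonneg _) (phi_abs_le i y)
  have hnorm : ‖(x : Euc m) - (y : Euc m)‖ ^ 2
      = 2 - 2 * ⟪(x : Euc m), (y : Euc m)⟫ := by
    rw [norm_sub_sq_real, norm_coe, norm_coe]; ring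
  have hK : Kt t x y = rexp (-(2 * t)) * rexp (2 * t * ⟪(x : Euc m), (y : Euc m)⟫) := by
    rw [Kt, hnorm, ← Real.exp_add]
    congr 1
    ring
  rw [hK]
  rw [Summable.tsum_sigma hsum]
  have hfib : ∀ n : ℕ, ∑' k : Fin n → Fin m, wt t ⟨n, k⟩ * (phi ⟨n, k⟩ x * phi ⟨n, k⟩ y)
      = rexp (-(2 * t)) * ((2 * t * ⟪(x : Euc m), (y : Euc m)⟫) ^ n / n.factorial) := by
    intro n
    rw [tsum_fintype]
    have hpow : (2 * t * ⟪(x : Euc m), (y : Euc m)⟫) ^ n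
        = (2 * t) ^ n * ∑ k : Fin n → Fin m, (phi ⟨n, k⟩ x * phi ⟨n, k⟩ y) := by
      rw [mul_pow, inner_coe, Fintype.sum_pow]
      congr 1
      refine Finset.sum_congr rfl fun k _ => ?_
      rw [Finset.prod_mul_distrib]
      rfl
    rw [hpow, Finset.mul_sum, Finset.sum_div, Finset.mul_sum]
    refine Finset.sum_congr rfl fun k _ => ?_
    show wt t ⟨n, k⟩ * _ = _
    rw [wt]
    field_simp
  calc rexp (-(2 * t)) * rexp (2 * t * ⟪(x : Euc m), (y : Euc m)⟫)
      = rexp (-(2 * t)) * ∑' n : ℕ, (2 * t * ⟪(x : Euc m), (y : Euc m)⟫) ^ n / n.factorial := by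
        rw [rexp_eq_tsum (2 * t * ⟪(x : Euc m), (y : Euc m)⟫)]
    _ = ∑' n : ℕ, rexp (-(2 * t)) * ((2 * t * ⟪(x : Euc m), (y : Euc m)⟫) ^ n / n.factorial) := by
        rw [tsum_mul_left]
    _ = _ := by
        exact (tsum_congr hfib).symm

/-- Swapping a `tsum` bounded by summable weights with an integral
against a probability measure. -/
lemma integral_tsum_of_bound {μ : Measure (Sph m)} [IsProbabilityMeasure μ]
    {f : Idx m → Sph m → ℝ} (hc : ∀ i, Continuous (f i)) {C : Idx m → ℝ}
    (hC : ∀ i, 0 ≤ C i) (hCs : Summable C) (hb : ∀ i x, |f i x| ≤ C i) :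
    ∫ x, (∑' i, f i x) ∂μ = ∑' i, ∫ x, f i x ∂μ := by
  refine integral_tsum (fun i => (hc i).aestronglyMeasurable) ?_
  have hle : ∀ i : Idx m, ∫⁻ x, ‖f i x‖₊ ∂μ ≤ ENNReal.ofReal (C i) := by
    intro i
    calc ∫⁻ x, ‖f i x‖₊ ∂μ ≤ ∫⁻ _, ENNReal.ofReal (C i) ∂μ := by
          refine lintegral_mono fun x => ?_
          rw [← enorm_eq_nnnorm, ← ofReal_norm_eq_enorm]
          exact ENNReal.ofReal_le_ofReal (by rw [Real.norm_eq_abs]; exact hb i x)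
      _ = ENNReal.ofReal (C i) := by simp
  refine ne_of_lt (lt_of_le_of_lt (ENNReal.tsum_le_tsum hle) ?_)
  rw [← ENNReal.ofReal_tsum_of_nonneg hC hCs]
  exact ENNReal.ofReal_lt_top

/-- Moments of the uniform measure. -/
def aI (m : ℕ) (i : Idx m) : ℝ := ∫ x, phi i x ∂(unifSphere m)

lemma aI_abs_le (hm : 0 < m) (i : Idx m) : |aI m i| ≤ 1 := by
  haveI := isProb hm
  rw [← Real.norm_eq_abs]
  calc ‖aI m i‖ ≤ 1 * ((unifSphere m) Set.univ).toReal := by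
        refine norm_integral_le_of_norm_le_const ?_
        exact Eventually.of_forall fun x => by
          rw [Real.norm_eq_abs]; exact phi_abs_le i x
    _ = 1 := by simp

lemma Fpot_eq_tsum (hm : 0 < m) (ht : 0 < t) (y : Sph m) :
    Fpot t y = ∑' i : Idx m, wt t i * (phi i y * aI m i) := by
  haveI := isProb hm
  have h1 : Fpot t y = ∫ z, (∑' i : Idx m, wt t i * (phi i y * phi i z)) ∂(unifSphere m) := by
    unfold Fpot
    exact integral_congr_ae (Eventually.of_forall fun z => by rw [Kt_eq_tsum ht])
  rw [h1, integral_tsum_of_bound (f := fun i z => wt t i * (phi i y * phi i z))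
    (fun i => continuous_const.mul (continuous_const.mul (phi_cont i)))
    (fun i => (wt_pos ht i).le) (summable_wt ht)
    (fun i z => by
      rw [abs_mul, abs_mul, abs_of_pos (wt_pos ht i)]
      calc wt t i * (|phi i y| * |phi i z|) ≤ wt t i * (1 * 1) := by
            refine mul_le_mul_of_nonneg_left ?_ (wt_pos ht i).le
            exact mul_le_mul (phi_abs_le i y) (phi_abs_le i z) (abs_nonneg _) zero_le_one
        _ = wt t i := by ring)]
  refine tsum_congr fun i => ?_
  rw [integral_const_mul, integral_const_mul]
  rfl

lemma Ct_eq_tsum (hm : 0 < m) (ht : 0 < t) :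
    Ct m t = ∑' i : Idx m, wt t i * (aI m i * aI m i) := by
  haveI := isProb hm
  have h1 : Ct m t = ∫ y, (∑' i : Idx m, wt t i * (phi i y * aI m i)) ∂(unifSphere m) := by
    unfold Ct
    exact integral_congr_ae (Eventually.of_forall fun y => by rw [Fpot_eq_tsum hm ht])
  rw [h1, integral_tsum_of_bound (f := fun i y => wt t i * (phi i y * aI m i))
    (fun i => continuous_const.mul ((phi_cont i).mul continuous_const))
    (fun i => (wt_pos ht i).le) (summable_wt ht)
    (fun i y => by
      rw [abs_mul, abs_mul, abs_of_pos (wt_pos ht i)]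
      calc wt t i * (|phi i y| * |aI m i|) ≤ wt t i * (1 * 1) := by
            refine mul_le_mul_of_nonneg_left ?_ (wt_pos ht i).le
            exact mul_le_mul (phi_abs_le i y) (aI_abs_le hm i) (abs_nonneg _) zero_le_one
        _ = wt t i := by ring)]
  refine tsum_congr fun i => ?_
  rw [integral_const_mul, integral_mul_const]
  rfl



/-! ### Discrete energy sums and the minimality bound -/

variable {N : ℕ}

/-- Feature sums of a configuration. -/
def Sphi (p : Fin N → Sph m) (i : Idx m) : ℝ := ∑ j, phi i (p j)

lemma Sphi_abs_le (p : Fin N → Sph m) (i : Idx m) : |Sphi p i| ≤ N := by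
  calc |Sphi p i| ≤ ∑ j, |phi i (p j)| := Finset.abs_sum_le_sum_abs _ _
    _ ≤ ∑ _j : Fin N, (1:ℝ) := Finset.sum_le_sum fun j _ => phi_abs_le i (p j)
    _ = N := by simp

lemma sum_sum_Kt (ht : 0 < t) (p : Fin N → Sph m) :
    ∑ j, ∑ j', Kt t (p j) (p j') = ∑' i : Idx m, wt t i * (Sphi p i * Sphi p i) := by
  have hinner : ∀ j, ∑ j', Kt t (p j) (p j')
      = ∑' i : Idx m, wt t i * (phi i (p j) * Sphi p i) := by
    intro j
    rw [Finset.sum_congr rfl fun j' _ => Kt_eq_tsum ht (p j) (p j'), ← Summable.tsum_finsetSum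
      (fun j' _ => summable_wt_mul ht 1 fun i => by
        rw [abs_mul]
        exact mul_le_one₀ (phi_abs_le _ _) (abs_nonneg _) (phi_abs_le _ _))]
    refine tsum_congr fun i => ?_
    rw [← Finset.mul_sum, ← Finset.mul_sum]
    rfl
  rw [Finset.sum_congr rfl fun j _ => hinner j, ← Summable.tsum_finsetSum
    (fun j _ => summable_wt_mul ht (N : ℝ) fun i => by
      rw [abs_mul]
      calc |phi i (p j)| * |Sphi p i| ≤ 1 * (N : ℝ) :=
            mul_le_mul (phi_abs_le _ _) (Sphi_abs_le p i) (abs_nonneg _) zero_le_one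
        _ = (N : ℝ) := one_mul _)]
  refine tsum_congr fun i => ?_
  rw [← Finset.mul_sum, ← Finset.sum_mul]
  rfl

lemma sum_Fpot_tsum (hm : 0 < m) (ht : 0 < t) (p : Fin N → Sph m) :
    ∑ j, Fpot t (p j) = ∑' i : Idx m, wt t i * (Sphi p i * aI m i) := by
  rw [Finset.sum_congr rfl fun j _ => Fpot_eq_tsum hm ht (p j), ← Summable.tsum_finsetSum
    (fun j _ => summable_wt_mul ht 1 fun i => by
      rw [abs_mul]
      exact mul_le_one₀ (phi_abs_le _ _) (abs_nonneg _) (aI_abs_le hm i))]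
  refine tsum_congr fun i => ?_
  rw [← Finset.mul_sum, ← Finset.sum_mul]
  rfl

lemma tsum_disc (hm : 0 < m) (ht : 0 < t) (p : Fin N → Sph m) :
    ∑' i : Idx m, wt t i * (Sphi p i - N * aI m i) ^ 2
      = (∑ j, ∑ j', Kt t (p j) (p j')) - 2 * N * (∑ j, Fpot t (p j))
        + (N : ℝ) ^ 2 * Ct m t := by
  have h1 : Summable fun i : Idx m => wt t i * (Sphi p i * Sphi p i) :=
    summable_wt_mul ht ((N : ℝ) * N) fun i => by
      rw [abs_mul]
      exact mul_le_mul (Sphi_abs_le p i) (Sphi_abs_le p i) (abs_nonneg _) (Nat.cast_nonneg N)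
  have h2 : Summable fun i : Idx m => wt t i * (Sphi p i * aI m i) :=
    summable_wt_mul ht (N : ℝ) fun i => by
      rw [abs_mul]
      calc |Sphi p i| * |aI m i| ≤ (N : ℝ) * 1 :=
            mul_le_mul (Sphi_abs_le p i) (aI_abs_le hm i) (abs_nonneg _) (Nat.cast_nonneg N)
        _ = (N : ℝ) := mul_one _
  have h3 : Summable fun i : Idx m => wt t i * (aI m i * aI m i) :=
    summable_wt_mul ht 1 fun i => by
      rw [abs_mul]
      exact mul_le_one₀ (aI_abs_le hm i) (abs_nonneg _) (aI_abs_le hm i)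
  rw [sum_sum_Kt ht p, sum_Fpot_tsum hm ht p, Ct_eq_tsum hm ht,
    ← tsum_mul_left, ← tsum_mul_left,
    ← Summable.tsum_sub h1 (h2.mul_left _), ← Summable.tsum_add ((h1.sub (h2.mul_left _))) (h3.mul_left _)]
  refine tsum_congr fun i => ?_
  ring

/-- The energy functional appearing in the theorem. -/
def En (t : ℝ) (p : Fin N → Sph m) : ℝ :=
  ∑ i, ∑ j, if i < j then Kt t (p i) (p j) else 0

lemma A2_eq (t : ℝ) (p : Fin N → Sph m) :
    ∑ j, ∑ j', Kt t (p j) (p j') = 2 * En t p + N := by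
  have hsplit : ∀ a b : Fin N, Kt t (p a) (p b)
      = (if a < b then Kt t (p a) (p b) else 0)
        + (if b < a then Kt t (p a) (p b) else 0)
        + (if a = b then Kt t (p a) (p b) else 0) := by
    intro a b
    rcases lt_trichotomy a b with h | h | h
    · rw [if_pos h, if_neg (asymm h), if_neg h.ne, add_zero, add_zero]
    · subst h
      rw [if_neg (lt_irrefl a), if_pos rfl, zero_add, zero_add]
    · rw [if_neg (asymm h), if_pos h, if_neg h.ne', zero_add, add_zero]
  calc ∑ j, ∑ j', Kt t (p j) (p j')
      = ∑ j, ∑ j', ((if j < j' then Kt t (p j) (p j') else 0)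
          + (if j' < j then Kt t (p j) (p j') else 0)
          + (if j = j' then Kt t (p j) (p j') else 0)) :=
        Finset.sum_congr rfl fun j _ => Finset.sum_congr rfl fun j' _ => hsplit j j'
    _ = En t p + (∑ j, ∑ j', if j' < j then Kt t (p j) (p j') else 0)
          + (∑ j, ∑ j', if j = j' then Kt t (p j) (p j') else 0) := by
        simp [Finset.sum_add_distrib, En]
    _ = En t p + En t p + N := by
        congr 1
        · congr 1
          rw [Finset.sum_comm]
          exact Finset.sum_congr rfl fun j _ => Finset.sum_congr rfl fun j' _ => by
            rw [Kt_symm]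
        · rw [Finset.sum_congr rfl fun j (_ : j ∈ Finset.univ) =>
            Finset.sum_ite_eq Finset.univ j (fun j' => Kt t (p j) (p j'))]
          simp [Kt_self]
    _ = 2 * En t p + N := by ring

set_option maxHeartbeats 1000000 in
lemma A2_decomp (t : ℝ) (p : Fin N → Sph m) (j0 : Fin N) :
    ∑ j, ∑ j', Kt t (p j) (p j')
      = (Kt t (p j0) (p j0) + ∑ b ∈ Finset.univ.erase j0, Kt t (p j0) (p b))
        + ∑ a ∈ Finset.univ.erase j0,
            (Kt t (p a) (p j0) + ∑ b ∈ Finset.univ.erase j0, Kt t (p a) (p b)) := by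
  rw [← Finset.add_sum_erase Finset.univ (fun j => ∑ j', Kt t (p j) (p j'))
    (Finset.mem_univ j0)]
  congr 1
  · rw [← Finset.add_sum_erase Finset.univ (fun j' => Kt t (p j0) (p j'))
      (Finset.mem_univ j0)]
  · refine Finset.sum_congr rfl fun a _ => ?_
    rw [← Finset.add_sum_erase Finset.univ (fun j' => Kt t (p a) (p j'))
      (Finset.mem_univ j0)]

set_option maxHeartbeats 1000000 in
lemma perpoint (t : ℝ) {p : Fin N → Sph m}
    (hp : ∀ v : Fin N → Sph m, En t p ≤ En t v) (j0 : Fin N) (v : Sph m) :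
    ∑ b ∈ Finset.univ.erase j0, Kt t (p j0) (p b)
      ≤ ∑ b ∈ Finset.univ.erase j0, Kt t v (p b) := by
  set q : Fin N → Sph m := Function.update p j0 v with hq
  have hq0 : q j0 = v := Function.update_self j0 v p
  have hqb : ∀ b ∈ Finset.univ.erase j0, q b = p b := fun b hb =>
    Function.update_of_ne (Finset.ne_of_mem_erase hb) v p
  have hA : ∑ j, ∑ j', Kt t (p j) (p j') ≤ ∑ j, ∑ j', Kt t (q j) (q j') := by
    rw [A2_eq t p, A2_eq t q]
    have := hp q
    linarith
  rw [A2_decomp t p j0, A2_decomp t q j0] at hA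
  set X := ∑ b ∈ Finset.univ.erase j0, Kt t (p j0) (p b) with hXdef
  set Y := ∑ b ∈ Finset.univ.erase j0, Kt t v (p b) with hYdef
  set I := ∑ a ∈ Finset.univ.erase j0, ∑ b ∈ Finset.univ.erase j0, Kt t (p a) (p b)
    with hIdef
  have hL : (Kt t (p j0) (p j0) + X)
        + ∑ a ∈ Finset.univ.erase j0,
            (Kt t (p a) (p j0) + ∑ b ∈ Finset.univ.erase j0, Kt t (p a) (p b))
      = 1 + X + (X + I) := by
    rw [Kt_self, Finset.sum_add_distrib]
    have hsym : ∑ a ∈ Finset.univ.erase j0, Kt t (p a) (p j0) = X := by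
      rw [hXdef]
      exact Finset.sum_congr rfl fun a _ => Kt_symm t (p a) (p j0)
    rw [hsym, hIdef]
  have hR : (Kt t (q j0) (q j0) + ∑ b ∈ Finset.univ.erase j0, Kt t (q j0) (q b))
        + ∑ a ∈ Finset.univ.erase j0,
            (Kt t (q a) (q j0) + ∑ b ∈ Finset.univ.erase j0, Kt t (q a) (q b))
      = 1 + Y + (Y + I) := by
    rw [hq0, Kt_self]
    have e1 : ∑ b ∈ Finset.univ.erase j0, Kt t v (q b) = Y := by
      rw [hYdef]
      exact Finset.sum_congr rfl fun b hb => by rw [hqb b hb]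
    have e2 : ∑ a ∈ Finset.univ.erase j0,
        (Kt t (q a) v + ∑ b ∈ Finset.univ.erase j0, Kt t (q a) (q b))
        = Y + I := by
      have e3 : ∀ a ∈ Finset.univ.erase j0,
          Kt t (q a) v + ∑ b ∈ Finset.univ.erase j0, Kt t (q a) (q b)
          = Kt t v (p a) + ∑ b ∈ Finset.univ.erase j0, Kt t (p a) (p b) := by
        intro a ha
        rw [hqb a ha, Kt_symm]
        congr 1
        exact Finset.sum_congr rfl fun b hb => by rw [hqb b hb]
      rw [Finset.sum_congr rfl e3, Finset.sum_add_distrib, hYdef, hIdef]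
    rw [e1, e2]
  rw [hL, hR] at hA
  linarith

set_option maxHeartbeats 1000000 in
lemma sum_erase_le (hm : 0 < m) (ht : 0 < t) {p : Fin N → Sph m}
    (hp : ∀ v : Fin N → Sph m, En t p ≤ En t v) (j0 : Fin N) :
    ∑ b ∈ Finset.univ.erase j0, Kt t (p j0) (p b) ≤ ((N : ℝ) - 1) * Ct m t := by
  haveI := isProb hm
  have h2 : ∑ b ∈ Finset.univ.erase j0, Kt t (p j0) (p b)
      = ∫ _v, (∑ b ∈ Finset.univ.erase j0, Kt t (p j0) (p b)) ∂(unifSphere m) := by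
    rw [integral_const]
    simp
  rw [h2]
  have h3 : ∫ _v, (∑ b ∈ Finset.univ.erase j0, Kt t (p j0) (p b)) ∂(unifSphere m)
      ≤ ∫ v, (∑ b ∈ Finset.univ.erase j0, Kt t v (p b)) ∂(unifSphere m) := by
    refine integral_mono (integrable_const _) ?_ (fun v => perpoint t hp j0 v)
    refine (continuous_finset_sum _ fun b _ => Kt_cont' t (p b)).integrable_of_hasCompactSupport ?_
    exact IsCompact.of_isClosed_subset isCompact_univ (isClosed_tsupport _)
      (Set.subset_univ _)
  refine h3.trans ?_
  rw [integral_finset_sum _ (fun b _ => by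
    refine (Kt_cont' t (p b)).integrable_of_hasCompactSupport ?_
    exact IsCompact.of_isClosed_subset isCompact_univ (isClosed_tsupport _)
      (Set.subset_univ _))]
  have h4 : ∀ b ∈ Finset.univ.erase j0,
      ∫ v, Kt t v (p b) ∂(unifSphere m) = Ct m t := by
    intro b _
    have : (fun v : Sph m => Kt t v (p b)) = fun v => Kt t (p b) v :=
      funext fun v => Kt_symm t v (p b)
    rw [this]
    exact Fpot_eq_Ct hm t (p b)
  rw [Finset.sum_congr rfl h4, Finset.sum_const, Finset.card_erase_of_mem (Finset.mem_univ j0),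
    Finset.card_univ, Fintype.card_fin, nsmul_eq_mul, Nat.cast_sub j0.pos]
  simp

set_option maxHeartbeats 1000000 in
lemma A2_le (hm : 0 < m) (ht : 0 < t) {p : Fin N → Sph m}
    (hp : ∀ v : Fin N → Sph m, En t p ≤ En t v) :
    ∑ j, ∑ j', Kt t (p j) (p j') ≤ N + N * (((N : ℝ) - 1) * Ct m t) := by
  calc ∑ j, ∑ j', Kt t (p j) (p j')
      = ∑ j, (Kt t (p j) (p j) + ∑ b ∈ Finset.univ.erase j, Kt t (p j) (p b)) :=
        Finset.sum_congr rfl fun j _ => by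
          rw [← Finset.add_sum_erase Finset.univ (fun j' => Kt t (p j) (p j'))
            (Finset.mem_univ j)]
    _ ≤ ∑ _j : Fin N, (1 + ((N : ℝ) - 1) * Ct m t) := by
        refine Finset.sum_le_sum fun j _ => ?_
        rw [Kt_self]
        linarith [sum_erase_le hm ht hp j]
    _ = N + N * (((N : ℝ) - 1) * Ct m t) := by
        rw [Finset.sum_const, Finset.card_univ, Fintype.card_fin, nsmul_eq_mul]
        ring

set_option maxHeartbeats 1000000 in
/-- The key discrepancy bound for energy minimizers. -/
lemma disc_le (hm : 0 < m) (ht : 0 < t) {p : Fin N → Sph m}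
    (hp : ∀ v : Fin N → Sph m, En t p ≤ En t v) (i0 : Idx m) :
    wt t i0 * (Sphi p i0 - N * aI m i0) ^ 2 ≤ N := by
  have hsum : Summable fun i : Idx m => wt t i * (Sphi p i - N * aI m i) ^ 2 := by
    refine summable_wt_mul ht ((2 * N) ^ 2) fun i => ?_
    have h1 : |Sphi p i - N * aI m i| ≤ 2 * N := by
      have h2 := abs_add_le (Sphi p i) (-((N : ℝ) * aI m i))
      rw [abs_neg, abs_mul, Nat.abs_cast] at h2
      have h3 : |Sphi p i| + (N : ℝ) * |aI m i| ≤ (N : ℝ) + (N : ℝ) * 1 :=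
        add_le_add (Sphi_abs_le p i)
          (mul_le_mul_of_nonneg_left (aI_abs_le hm i) (Nat.cast_nonneg N))
      calc |Sphi p i - N * aI m i| = |Sphi p i + -((N : ℝ) * aI m i)| := by
            rw [sub_eq_add_neg]
        _ ≤ |Sphi p i| + (N : ℝ) * |aI m i| := h2
        _ ≤ (N : ℝ) + (N : ℝ) * 1 := h3
        _ = 2 * N := by ring
    rw [abs_of_nonneg (sq_nonneg _), ← sq_abs]
    exact pow_le_pow_left₀ (abs_nonneg _) h1 2
  have hterm : wt t i0 * (Sphi p i0 - N * aI m i0) ^ 2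
      ≤ ∑' i : Idx m, wt t i * (Sphi p i - N * aI m i) ^ 2 :=
    hsum.le_tsum i0 fun j _ => mul_nonneg (wt_pos ht j).le (sq_nonneg _)
  refine hterm.trans ?_
  rw [tsum_disc hm ht p]
  have hB : ∑ j, Fpot t (p j) = N * Ct m t := by
    rw [Finset.sum_congr rfl fun j _ => Fpot_eq_Ct hm t (p j), Finset.sum_const,
      Finset.card_univ, Fintype.card_fin, nsmul_eq_mul]
  rw [hB]
  have hA := A2_le hm ht hp
  have hc := Ct_nonneg hm t
  have hNc : 0 ≤ (N : ℝ) * Ct m t := mul_nonneg (Nat.cast_nonneg N) hc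
  nlinarith [hA, hNc]



/-! ### Convergence of moments and of integrals of continuous functions -/

lemma cm_integrable {μ : Measure (Sph m)} [IsFiniteMeasure μ] {g : Sph m → ℝ}
    (hgc : Continuous g) : Integrable g μ :=
  hgc.integrable_of_hasCompactSupport
    (IsCompact.of_isClosed_subset isCompact_univ (isClosed_tsupport _) (Set.subset_univ _))

lemma sqrtN_inv_tendsto : Tendsto (fun N : ℕ => (Real.sqrt N)⁻¹) atTop (𝓝 0) := by
  have h1 : Tendsto (fun N : ℕ => Real.sqrt (N : ℝ)) atTop atTop := by
    have h2 := (tendsto_rpow_atTop (y := (1:ℝ)/2) (by norm_num)).comp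
      (tendsto_natCast_atTop_atTop (R := ℝ))
    exact h2.congr fun N => (Real.sqrt_eq_rpow _).symm
  exact tendsto_inv_atTop_zero.comp h1

/-- Moment convergence for energy minimizers. -/
lemma avg_tendsto (hm : 0 < m) (ht : 0 < t) (u : (N : ℕ) → Fin N → Sph m)
    (hp : ∀ N : ℕ, 1 ≤ N → ∀ v : Fin N → Sph m, En t (u N) ≤ En t v) (i0 : Idx m) :
    Tendsto (fun N : ℕ => (N : ℝ)⁻¹ * Sphi (u N) i0) atTop (𝓝 (aI m i0)) := by
  have hw := wt_pos ht (m := m) i0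
  have hbound : ∀ N : ℕ, 1 ≤ N →
      |(N : ℝ)⁻¹ * Sphi (u N) i0 - aI m i0|
        ≤ (Real.sqrt (wt t i0))⁻¹ * (Real.sqrt N)⁻¹ := by
    intro N hN
    have hNpos : (0:ℝ) < N := by exact_mod_cast hN
    have hkey := disc_le hm ht (hp N hN) i0
    have hsq : ((N : ℝ)⁻¹ * Sphi (u N) i0 - aI m i0) ^ 2 ≤ (wt t i0)⁻¹ * (N : ℝ)⁻¹ := by
      have he : (N : ℝ)⁻¹ * Sphi (u N) i0 - aI m i0
          = (Sphi (u N) i0 - N * aI m i0) * (N : ℝ)⁻¹ := by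
        field_simp
      rw [he, mul_pow]
      have h1 : (Sphi (u N) i0 - N * aI m i0) ^ 2 ≤ (N : ℝ) / wt t i0 := by
        rw [le_div_iff₀ hw, mul_comm]
        exact hkey
      calc (Sphi (u N) i0 - N * aI m i0) ^ 2 * ((N:ℝ)⁻¹) ^ 2
          ≤ ((N : ℝ) / wt t i0) * ((N:ℝ)⁻¹) ^ 2 :=
            mul_le_mul_of_nonneg_right h1 (by positivity)
        _ = (wt t i0)⁻¹ * (N : ℝ)⁻¹ := by
            field_simp
    calc |(N : ℝ)⁻¹ * Sphi (u N) i0 - aI m i0|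
        = Real.sqrt (((N : ℝ)⁻¹ * Sphi (u N) i0 - aI m i0) ^ 2) :=
          (Real.sqrt_sq_eq_abs _).symm
      _ ≤ Real.sqrt ((wt t i0)⁻¹ * (N : ℝ)⁻¹) := Real.sqrt_le_sqrt hsq
      _ = (Real.sqrt (wt t i0))⁻¹ * (Real.sqrt N)⁻¹ := by
          rw [Real.sqrt_mul (by positivity), Real.sqrt_inv, Real.sqrt_inv]
  have hB : Tendsto (fun N : ℕ => (Real.sqrt (wt t i0))⁻¹ * (Real.sqrt N)⁻¹)
      atTop (𝓝 0) := by
    have := sqrtN_inv_tendsto.const_mul ((Real.sqrt (wt t i0))⁻¹ : ℝ)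
    simpa using this
  have habs : Tendsto (fun N : ℕ => |(N : ℝ)⁻¹ * Sphi (u N) i0 - aI m i0|)
      atTop (𝓝 0) := by
    refine squeeze_zero' (Eventually.of_forall fun N => abs_nonneg _) ?_ hB
    filter_upwards [eventually_ge_atTop 1] with N hN
    exact hbound N hN
  rw [tendsto_iff_dist_tendsto_zero]
  refine habs.congr fun N => ?_
  rw [Real.dist_eq]

/-- Coordinate functions as continuous maps on the sphere. -/
def coordCM (k : Fin m) : C(Sph m, ℝ) :=
  ⟨fun x => (x : Euc m) k, ((EuclideanSpace.proj k).continuous).comp continuous_subtype_val⟩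

lemma isMonomial_of_mem_closure {g : C(Sph m, ℝ)}
    (hg : g ∈ Submonoid.closure (Set.range (coordCM (m := m)))) :
    ∃ i : Idx m, ⇑g = phi i := by
  induction hg using Submonoid.closure_induction with
  | mem g hgm =>
      obtain ⟨k, rfl⟩ := hgm
      refine ⟨⟨1, fun _ => k⟩, ?_⟩
      funext x
      simp [coordCM, phi]
      rfl
  | one =>
      refine ⟨⟨0, fun j => j.elim0⟩, ?_⟩
      funext x
      simp [phi]
  | mul g1 g2 _ _ h1 h2 =>
      obtain ⟨i1, hi1⟩ := h1
      obtain ⟨i2, hi2⟩ := h2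
      refine ⟨⟨i1.1 + i2.1, Fin.append i1.2 i2.2⟩, ?_⟩
      funext x
      rw [ContinuousMap.mul_apply, hi1, hi2]
      show phi i1 x * phi i2 x = ∏ j : Fin (i1.1 + i2.1), (x : Euc m) (Fin.append i1.2 i2.2 j)
      rw [Fin.prod_univ_add]
      congr 1
      · exact Finset.prod_congr rfl fun j _ => by rw [Fin.append_left]
      · exact Finset.prod_congr rfl fun j _ => by rw [Fin.append_right]

lemma avg_tendsto_of_mem (hm : 0 < m) (ht : 0 < t) (u : (N : ℕ) → Fin N → Sph m)
    (hp : ∀ N : ℕ, 1 ≤ N → ∀ v : Fin N → Sph m, En t (u N) ≤ En t v)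
    {g : C(Sph m, ℝ)}
    (hg : g ∈ Algebra.adjoin ℝ (Set.range (coordCM (m := m)))) :
    Tendsto (fun N : ℕ => (N : ℝ)⁻¹ * ∑ j, g (u N j)) atTop
      (𝓝 (∫ x, g x ∂(unifSphere m))) := by
  haveI := isProb hm
  rw [← Subalgebra.mem_toSubmodule, Algebra.adjoin_eq_span] at hg
  induction hg using Submodule.span_induction with
  | mem g hgm =>
      obtain ⟨i, hi⟩ := isMonomial_of_mem_closure hgm
      have he : (fun N : ℕ => (N:ℝ)⁻¹ * ∑ j, g (u N j))
          = fun N : ℕ => (N:ℝ)⁻¹ * Sphi (u N) i := by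
        funext N
        rw [Sphi]
        congr 1
        exact Finset.sum_congr rfl fun j _ => by rw [hi]
      have hInt : ∫ x, g x ∂(unifSphere m) = aI m i :=
        integral_congr_ae (Eventually.of_forall fun x => by rw [hi])
      rw [he, hInt]
      exact avg_tendsto hm ht u hp i
  | zero =>
      simpa using tendsto_const_nhds (α := ℝ) (f := atTop (α := ℕ)) (a := 0)
  | add g1 g2 _ _ hg1 hg2 =>
      have hsum := hg1.add hg2
      have he : (fun N : ℕ => (N:ℝ)⁻¹ * ∑ j, (g1 + g2) (u N j))
          = fun N : ℕ => ((N:ℝ)⁻¹ * ∑ j, g1 (u N j)) + ((N:ℝ)⁻¹ * ∑ j, g2 (u N j)) := by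
        funext N
        simp [ContinuousMap.add_apply, Finset.sum_add_distrib, mul_add]
      rw [he, show ∫ x, (g1 + g2) x ∂(unifSphere m)
          = (∫ x, g1 x ∂(unifSphere m)) + ∫ x, g2 x ∂(unifSphere m) by
        simp only [ContinuousMap.add_apply]
        exact integral_add (cm_integrable g1.continuous) (cm_integrable g2.continuous)]
      exact hsum
  | smul r g1 _ hg1 =>
      have hsmul := hg1.const_mul r
      have he : (fun N : ℕ => (N:ℝ)⁻¹ * ∑ j, (r • g1) (u N j))
          = fun N : ℕ => r * ((N:ℝ)⁻¹ * ∑ j, g1 (u N j)) := by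
        funext N
        simp only [ContinuousMap.smul_apply, smul_eq_mul, Finset.mul_sum]
        exact Finset.sum_congr rfl fun j _ => by ring
      rw [he, show ∫ x, (r • g1) x ∂(unifSphere m) = r * ∫ x, g1 x ∂(unifSphere m) by
        simp only [ContinuousMap.smul_apply, smul_eq_mul]
        exact integral_const_mul r _]
      exact hsmul

lemma coord_separates :
    (Algebra.adjoin ℝ (Set.range (coordCM (m := m)))).SeparatesPoints := by
  intro x y hxy
  have hne : (x : Euc m) ≠ (y : Euc m) := fun h => hxy (Subtype.ext h)
  have hex : ∃ k, (x : Euc m) k ≠ (y : Euc m) k := by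
    by_contra hforall
    push_neg at hforall
    exact hne (PiLp.ext hforall)
  obtain ⟨k, hk⟩ := hex
  exact ⟨⇑(coordCM k),
    ⟨coordCM k, Algebra.subset_adjoin (Set.mem_range_self k), rfl⟩, hk⟩

lemma integral_counting {N : ℕ} (hN : 1 ≤ N) (p : Fin N → Sph m) {g : Sph m → ℝ}
    (hgc : Continuous g) :
    ∫ x, g x ∂(((N : ℝ≥0∞))⁻¹ • ∑ j : Fin N, Measure.dirac (p j))
      = (N : ℝ)⁻¹ * ∑ j, g (p j) := by
  rw [integral_smul_measure,
    integral_finset_sum_measure (fun j _ => cm_integrable hgc)]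
  rw [Finset.sum_congr rfl fun j _ => integral_dirac' g (p j) hgc.stronglyMeasurable]
  rw [ENNReal.toReal_inv, ENNReal.toReal_natCast, smul_eq_mul]


end SphProof

/-- For `d ≥ 1`, `t > 0`, if for each `N ≥ 1` the configuration `u N` minimizes
the pairwise Gaussian potential `Σ_{i<j} G_t(u_i,u_j)` over all `N`-point configurations on `S^d`,
then the normalized counting measures of `u N` converge weak* to `σ_d` as `N → ∞`. -/
theorem minimizing_configurations_tendsto_uniform (d : ℕ) (hd : 1 ≤ d) (t : ℝ) (ht : 0 < t)
    (u : (N : ℕ) → Fin N → Sph (d + 1))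
    (hmin : ∀ N : ℕ, 1 ≤ N → ∀ v : Fin N → Sph (d + 1),
      (∑ i : Fin N, ∑ j : Fin N, if i < j then
          Real.exp (-t * ‖(u N i : Euc (d + 1)) - (u N j : Euc (d + 1))‖ ^ 2) else 0) ≤
        ∑ i : Fin N, ∑ j : Fin N, if i < j then
          Real.exp (-t * ‖(v i : Euc (d + 1)) - (v j : Euc (d + 1))‖ ^ 2) else 0) :
    ∀ h : Sph (d + 1) → ℝ, Continuous h →
      Tendsto (fun N : ℕ =>
          ∫ x, h x ∂(((N : ℝ≥0∞))⁻¹ • ∑ i : Fin N, Measure.dirac (u N i)))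
        atTop (𝓝 (∫ x, h x ∂(unifSphere (d + 1)))) := by
  intro h hc
  classical
  have hm : 0 < d + 1 := Nat.succ_pos d
  haveI := SphProof.isProb hm
  have hp : ∀ N : ℕ, 1 ≤ N → ∀ v : Fin N → Sph (d + 1),
      SphProof.En t (u N) ≤ SphProof.En t v := by
    intro N hN v
    exact hmin N hN v
  rw [Metric.tendsto_atTop]
  intro ε hε
  obtain ⟨g, hgmem, hgapprox⟩ : ∃ g ∈ Algebra.adjoin ℝ
      (Set.range (SphProof.coordCM (m := d + 1))),
      ∀ x : Sph (d + 1), |g x - h x| < ε / 4 := by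
    obtain ⟨⟨g, hgA⟩, hg⟩ :=
      ContinuousMap.exists_mem_subalgebra_near_continuous_of_separatesPoints
        _ SphProof.coord_separates h hc (ε / 4) (by positivity)
    exact ⟨g, hgA, fun x => by simpa [Real.norm_eq_abs] using hg x⟩
  have hgt := SphProof.avg_tendsto_of_mem hm ht u hp hgmem
  rw [Metric.tendsto_atTop] at hgt
  obtain ⟨N0, hN0⟩ := hgt (ε / 4) (by positivity)
  refine ⟨max N0 1, fun N hN => ?_⟩
  have hN1 : 1 ≤ N := le_trans (le_max_right _ _) hN
  have hNpos : (0:ℝ) < N := by exact_mod_cast hN1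
  have hNN0 : N ≥ N0 := le_trans (le_max_left _ _) hN
  rw [SphProof.integral_counting hN1 (u N) hc]
  have havg_g := hN0 N hNN0
  rw [Real.dist_eq] at havg_g ⊢
  set A := (N : ℝ)⁻¹ * ∑ j, h (u N j) with hA
  set B := (N : ℝ)⁻¹ * ∑ j, g (u N j) with hB
  set C := ∫ x, g x ∂(unifSphere (d + 1)) with hC
  set D := ∫ x, h x ∂(unifSphere (d + 1)) with hD
  have e1 : |A - B| ≤ ε / 4 := by
    rw [hA, hB, ← mul_sub, ← Finset.sum_sub_distrib, abs_mul, abs_inv, Nat.abs_cast]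
    calc ((N:ℝ))⁻¹ * |∑ j, (h (u N j) - g (u N j))|
        ≤ ((N:ℝ))⁻¹ * ∑ j, |h (u N j) - g (u N j)| := by
          exact mul_le_mul_of_nonneg_left (Finset.abs_sum_le_sum_abs _ _) (by positivity)
      _ ≤ ((N:ℝ))⁻¹ * ∑ _j : Fin N, (ε / 4) := by
          refine mul_le_mul_of_nonneg_left (Finset.sum_le_sum fun j _ => ?_) (by positivity)
          rw [abs_sub_comm]
          exact (hgapprox (u N j)).le
      _ = ε / 4 := by
          rw [Finset.sum_const, Finset.card_univ, Fintype.card_fin, nsmul_eq_mul]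
          field_simp
  have e2 : |C - D| ≤ ε / 4 := by
    rw [hC, hD, ← integral_sub (SphProof.cm_integrable g.continuous)
      (SphProof.cm_integrable hc), ← Real.norm_eq_abs]
    calc ‖∫ x, (g x - h x) ∂(unifSphere (d + 1))‖
        ≤ (ε / 4) * ((unifSphere (d + 1)) Set.univ).toReal := by
          refine norm_integral_le_of_norm_le_const ?_
          exact Eventually.of_forall fun x => by
            rw [Real.norm_eq_abs]
            exact (hgapprox x).le
      _ = ε / 4 := by simp
  calc |A - D| ≤ |A - B| + |B - D| := abs_sub_le A B D
    _ ≤ |A - B| + (|B - C| + |C - D|) := by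
        linarith [abs_sub_le B C D]
    _ < ε / 4 + (ε / 4 + ε / 4) := by
        refine add_lt_add_of_le_of_lt e1 (add_lt_add_of_lt_of_le havg_g e2)
    _ < ε := by linarith
end
end

section
/- Let τ > 0, f : ℝⁿ → S^{m−1} be Borel measurable, p_data a Borel probability measure on ℝⁿ, and x, y ∈ ℝⁿ fixed. If x⁻₁, x⁻₂, … are i.i.d. samples from p_data, then almost surely lim_{M→∞} log( (1/M) e^{f(x)·f(y)/τ} + (1/M) Σ_{i=1}^M e^{f(x⁻_i)·f(x)/τ} ) = log E_{x⁻∼p_data}[e^{f(x⁻)·f(x)/τ}]. -/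
open MeasureTheory Real Filter Metric
open scoped RealInnerProductSpace ENNReal Topology BigOperators

noncomputable section

/-- Strong-law convergence of the log-sum term: if `X 0, X 1, …` are i.i.d.
samples from `p_data`, then almost surely
`log((1/M) e^{f(x)·f(y)/τ} + (1/M) Σ_{i<M} e^{f(X i)·f(x)/τ}) →
 log E_{x⁻∼p_data}[e^{f(x⁻)·f(x)/τ}]` as `M → ∞`. -/
theorem log_avg_exp_tendsto_ae {n m : ℕ} (τ : ℝ) (hτ : 0 < τ)
    (pdata : Measure (Euc n)) [IsProbabilityMeasure pdata]
    (f : Euc n → Sph m) (hf : Measurable f) (x y : Euc n)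
    {Ω : Type*} [MeasurableSpace Ω] (P : Measure Ω) [IsProbabilityMeasure P]
    (X : ℕ → Ω → Euc n) (hXmeas : ∀ i, Measurable (X i))
    (hindep : ProbabilityTheory.iIndepFun (m := fun _ : ℕ => (inferInstance : MeasurableSpace (Euc n))) X P)
    (hdist : ∀ i, P.map (X i) = pdata) :
    ∀ᵐ ω ∂P, Tendsto (fun M : ℕ =>
        Real.log ((1 / (M : ℝ)) * Real.exp (⟪(f x : Euc m), (f y : Euc m)⟫ / τ) +
          (1 / (M : ℝ)) * ∑ i ∈ Finset.range M, Real.exp (⟪(f (X i ω) : Euc m), (f x : Euc m)⟫ / τ)))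
      atTop (𝓝 (Real.log (∫ x', Real.exp (⟪(f x' : Euc m), (f x : Euc m)⟫ / τ) ∂pdata))) := by
  classical
  set g : Euc n → ℝ := fun z => Real.exp (⟪(f z : Euc m), (f x : Euc m)⟫ / τ) with hg_def
  have hcoe : Measurable (fun z => (f z : Euc m)) := measurable_subtype_coe.comp hf
  have hg : Measurable g := by
    apply Real.measurable_exp.comp
    exact (hcoe.inner (𝕜 := ℝ) measurable_const).div_const τ
  have hbound : ∀ z, g z ∈ Set.Icc (Real.exp (-(1/τ))) (Real.exp (1/τ)) := by
    intro z
    have h1 : |⟪(f z : Euc m), (f x : Euc m)⟫| ≤ 1 := by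
      calc |⟪(f z : Euc m), (f x : Euc m)⟫| ≤ ‖(f z : Euc m)‖ * ‖(f x : Euc m)‖ :=
            abs_real_inner_le_norm _ _
        _ = 1 := by
            have hz := mem_sphere_zero_iff_norm.1 (f z).2
            have hx := mem_sphere_zero_iff_norm.1 (f x).2
            rw [hz, hx, mul_one]
    have h2 : -(1/τ) ≤ ⟪(f z : Euc m), (f x : Euc m)⟫ / τ ∧
        ⟪(f z : Euc m), (f x : Euc m)⟫ / τ ≤ 1/τ := by
      rw [abs_le] at h1
      constructor
      · have h3 : (-1 : ℝ)/τ ≤ ⟪(f z : Euc m), (f x : Euc m)⟫ / τ := by gcongr; exact h1.1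
        simpa [neg_div] using h3
      · gcongr; exact h1.2
    exact ⟨Real.exp_le_exp.2 h2.1, Real.exp_le_exp.2 h2.2⟩
  -- integrability under pdata
  have hint_pdata : Integrable g pdata := by
    refine (integrable_const (Real.exp (1/τ))).mono' hg.aestronglyMeasurable ?_
    filter_upwards with z
    rw [Real.norm_eq_abs, abs_of_pos (Real.exp_pos _)]
    exact (hbound z).2
  set I : ℝ := ∫ x', g x' ∂pdata with hI_def
  have hIpos : 0 < I := by
    have hle : Real.exp (-(1/τ)) ≤ I := by
      calc Real.exp (-(1/τ)) = ∫ _, Real.exp (-(1/τ)) ∂pdata := by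
            simp
        _ ≤ I := integral_mono (integrable_const _) hint_pdata fun z => (hbound z).1
    exact lt_of_lt_of_le (Real.exp_pos _) hle
  -- SLLN
  set Y : ℕ → Ω → ℝ := fun i ω => g (X i ω) with hY_def
  have hYmeas : ∀ i, Measurable (Y i) := fun i => hg.comp (hXmeas i)
  have hYint : Integrable (Y 0) P := by
    refine (integrable_const (Real.exp (1/τ))).mono' (hYmeas 0).aestronglyMeasurable ?_
    filter_upwards with ω
    rw [Real.norm_eq_abs, abs_of_pos (Real.exp_pos _)]
    exact (hbound _).2
  have hident : ∀ i, ProbabilityTheory.IdentDistrib (Y i) (Y 0) P P := by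
    intro i
    have hXid : ProbabilityTheory.IdentDistrib (X i) (X 0) P P :=
      ⟨(hXmeas i).aemeasurable, (hXmeas 0).aemeasurable, by rw [hdist i, hdist 0]⟩
    exact hXid.comp hg
  have hpind : Pairwise (Function.onFun (ProbabilityTheory.IndepFun · · P) Y) := by
    intro i j hij
    exact (hindep.indepFun hij).comp hg hg
  have hEY : (∫ ω, Y 0 ω ∂P) = I := by
    rw [hI_def, ← hdist 0, integral_map (hXmeas 0).aemeasurable hg.aestronglyMeasurable]
  have hslln := ProbabilityTheory.strong_law_ae_real Y hYint hpind hident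
  rw [hEY] at hslln
  filter_upwards [hslln] with ω hω
  -- the first term tends to 0
  have h0 : Tendsto (fun M : ℕ => (1 / (M : ℝ)) * Real.exp (⟪(f x : Euc m), (f y : Euc m)⟫ / τ))
      atTop (𝓝 0) := by
    simpa using tendsto_one_div_atTop_nhds_zero_nat.mul_const
      (Real.exp (⟪(f x : Euc m), (f y : Euc m)⟫ / τ))
  have h1 : Tendsto (fun M : ℕ => (1 / (M : ℝ)) * ∑ i ∈ Finset.range M, Y i ω) atTop (𝓝 I) := by
    simpa [div_eq_mul_inv, mul_comm] using hω
  have hsum : Tendsto (fun M : ℕ =>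
      (1 / (M : ℝ)) * Real.exp (⟪(f x : Euc m), (f y : Euc m)⟫ / τ) +
        (1 / (M : ℝ)) * ∑ i ∈ Finset.range M, Y i ω) atTop (𝓝 I) := by
    simpa using h0.add h1
  exact ((Real.continuousAt_log hIpos.ne').tendsto).comp hsum
end
end

section
/- Let t > 0, m ≥ 2, and B > 1 an integer. For any points u₁, …, u_B ∈ S^{m−1}, the empirical uniformity quantity satisfies the strict lower bound log( (1/B²) Σ_{i=1}^B Σ_{j=1}^B e^{−t‖u_i − u_j‖₂²} ) > −2t + log ₀F₁(;m/2; t²). -/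
open MeasureTheory Real Filter Metric
open scoped RealInnerProductSpace ENNReal Topology BigOperators

noncomputable section

/-- Confluent hypergeometric limit function `₀F₁(; α; z) = Σ_n zⁿ/((α)_n n!)`. -/
noncomputable def hyp0F1 (α z : ℝ) : ℝ :=
  ∑' k : ℕ, z ^ k / ((ascPochhammer ℝ k).eval α * (Nat.factorial k : ℝ))

namespace EmpUnif
open Finset


/-- `aP k x = (x)_k / k!`. -/
noncomputable def aP (k : ℕ) (x : ℝ) : ℝ := (ascPochhammer ℝ k).eval x / (Nat.factorial k)

lemma poch_pos {x : ℝ} (hx : 0 < x) (n : ℕ) : 0 < (ascPochhammer ℝ n).eval x := by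
  induction n with
  | zero => simp
  | succ n ih =>
    rw [ascPochhammer_succ_eval]
    have : (0:ℝ) < x + n := by positivity
    exact mul_pos ih this

lemma factorial_le_poch {x : ℝ} (hx : 1 ≤ x) (n : ℕ) :
    (n.factorial : ℝ) ≤ (ascPochhammer ℝ n).eval x := by
  induction n with
  | zero => simp
  | succ n ih =>
    rw [ascPochhammer_succ_eval, Nat.factorial_succ]
    have h1 : (0:ℝ) ≤ (n.factorial : ℝ) := by positivity
    have h2 : (0:ℝ) < x := lt_of_lt_of_le one_pos hx
    have h3 := poch_pos h2 n
    push_cast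
    nlinarith [ih]

lemma aP_zero (x : ℝ) : aP 0 x = 1 := by simp [aP]

lemma aP_nonneg {x : ℝ} (hx : 0 < x) (k : ℕ) : 0 ≤ aP k x := by
  have h1 := poch_pos hx k
  have h2 : (0:ℝ) < (Nat.factorial k : ℝ) := by positivity
  exact div_nonneg h1.le h2.le

lemma aP_succ_mul (k : ℕ) (x : ℝ) : ((k:ℝ)+1) * aP (k+1) x = (x + k) * aP k x := by
  have hfac : (Nat.factorial (k+1) : ℝ) = ((k:ℝ)+1) * Nat.factorial k := by
    push_cast [Nat.factorial_succ]; ring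
  have hk : (Nat.factorial k : ℝ) ≠ 0 := by positivity
  have hk1 : ((k:ℝ)+1) ≠ 0 := by positivity
  rw [aP, aP, ascPochhammer_succ_eval, hfac]
  field_simp

lemma vand2 (x y : ℝ) : ∀ n : ℕ, ∑ k ∈ range (n+1), aP k x * aP (n-k) y = aP n (x+y) := by
  intro n
  induction n with
  | zero => simp [aP_zero]
  | succ n ih =>
    have hn1 : ((n:ℝ)+1) ≠ 0 := by positivity
    apply mul_left_cancel₀ hn1
    have key : ∀ k ∈ range (n+2), ((n:ℝ)+1) * (aP k x * aP (n+1-k) y)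
        = (k : ℝ) * aP k x * aP (n+1-k) y
          + ((n+1-k : ℕ) : ℝ) * aP (n+1-k) y * aP k x := by
      intro k hk
      rw [mem_range] at hk
      have hk' : k ≤ n+1 := by omega
      have hc : ((n+1-k : ℕ) : ℝ) = (n:ℝ)+1-(k:ℝ) := by
        push_cast [Nat.cast_sub hk']; ring
      rw [hc]; ring
    rw [Finset.mul_sum, Finset.sum_congr rfl key, Finset.sum_add_distrib]
    have hA : ∑ k ∈ range (n+2), (k : ℝ) * aP k x * aP (n+1-k) y
        = ∑ i ∈ range (n+1), (x + i) * (aP i x * aP (n-i) y) := by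
      rw [Finset.sum_range_succ']
      simp only [Nat.cast_zero, zero_mul, add_zero]
      refine Finset.sum_congr rfl fun i hi => ?_
      have h1 : n + 1 - (i+1) = n - i := by omega
      have h2 : ((i:ℝ)+1) * aP (i+1) x = (x + i) * aP i x := aP_succ_mul i x
      rw [h1]
      push_cast
      calc ((i:ℝ)+1) * aP (i+1) x * aP (n-i) y
          = (((i:ℝ)+1) * aP (i+1) x) * aP (n-i) y := by ring
        _ = ((x + i) * aP i x) * aP (n-i) y := by rw [h2]
        _ = (x + i) * (aP i x * aP (n-i) y) := by ring
    have hrefl : ∑ k ∈ range (n+2), ((n+1-k : ℕ) : ℝ) * aP (n+1-k) y * aP k x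
        = ∑ k ∈ range (n+2), (k : ℝ) * aP k y * aP (n+1-k) x := by
      rw [← Finset.sum_range_reflect]
      refine Finset.sum_congr rfl fun j hj => ?_
      rw [mem_range] at hj
      have e1 : n + 2 - 1 - j = n + 1 - j := by omega
      have e2 : n + 1 - (n + 1 - j) = j := by omega
      rw [e1, e2]
    have hB : ∑ k ∈ range (n+2), (k : ℝ) * aP k y * aP (n+1-k) x
        = ∑ i ∈ range (n+1), (y + i) * (aP i y * aP (n-i) x) := by
      rw [Finset.sum_range_succ']
      simp only [Nat.cast_zero, zero_mul, add_zero]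
      refine Finset.sum_congr rfl fun i hi => ?_
      have h1 : n + 1 - (i+1) = n - i := by omega
      have h2 : ((i:ℝ)+1) * aP (i+1) y = (y + i) * aP i y := aP_succ_mul i y
      rw [h1]
      push_cast
      calc ((i:ℝ)+1) * aP (i+1) y * aP (n-i) x
          = (((i:ℝ)+1) * aP (i+1) y) * aP (n-i) x := by ring
        _ = ((y + i) * aP i y) * aP (n-i) x := by rw [h2]
        _ = (y + i) * (aP i y * aP (n-i) x) := by ring
    have hB2 : ∑ i ∈ range (n+1), (y + i) * (aP i y * aP (n-i) x)
        = ∑ i ∈ range (n+1), (y + ((n-i : ℕ):ℝ)) * (aP i x * aP (n-i) y) := by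
      rw [← Finset.sum_range_reflect]
      refine Finset.sum_congr rfl fun i hi => ?_
      rw [mem_range] at hi
      have e1 : n + 1 - 1 - i = n - i := by omega
      have e2 : n - (n - i) = i := by omega
      rw [e1, e2]; ring
    rw [hA, hrefl, hB, hB2, ← Finset.sum_add_distrib]
    have hcomb : ∀ i ∈ range (n+1),
        (x + i) * (aP i x * aP (n-i) y) + (y + ((n-i:ℕ):ℝ)) * (aP i x * aP (n-i) y)
          = (x + y + n) * (aP i x * aP (n-i) y) := by
      intro i hi
      rw [mem_range] at hi
      have : ((n-i:ℕ):ℝ) = (n:ℝ) - i := by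
        push_cast [Nat.cast_sub (by omega : i ≤ n)]; ring
      rw [this]; ring
    rw [Finset.sum_congr rfl hcomb, ← Finset.mul_sum, ih, aP_succ_mul]

lemma vandm {ι : Type*} [DecidableEq ι] (s : Finset ι) (x : ι → ℝ) :
    ∀ n : ℕ, ∑ γ ∈ piAntidiag s n, ∏ i ∈ s, aP (γ i) (x i) = aP n (∑ i ∈ s, x i) := by
  induction s using Finset.cons_induction with
  | empty =>
    intro n
    match n with
    | 0 => simp [aP_zero]
    | (k+1) =>
      rw [Finset.piAntidiag_empty_of_ne_zero (by omega)]
      simp [aP, ascPochhammer_eval_zero]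
  | cons i s hi ih =>
    intro n
    rw [Finset.piAntidiag_cons hi, Finset.sum_disjiUnion]
    have hp : ∀ p ∈ Finset.HasAntidiagonal.antidiagonal n,
        (∑ γ ∈ (piAntidiag s p.2).map
            (addRightEmbedding fun t => if t = i then p.1 else 0),
          ∏ j ∈ Finset.cons i s hi, aP (γ j) (x j))
        = aP p.1 (x i) * aP p.2 (∑ j ∈ s, x j) := by
      intro p hp
      rw [Finset.sum_map]
      have hterm : ∀ γ ∈ piAntidiag s p.2,
          (∏ j ∈ Finset.cons i s hi,
            aP ((addRightEmbedding fun t => if t = i then p.1 else 0) γ j) (x j))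
          = aP p.1 (x i) * ∏ j ∈ s, aP (γ j) (x j) := by
        intro γ hγ
        rw [Finset.mem_piAntidiag] at hγ
        have hγi : γ i = 0 := by
          by_contra h
          exact hi (hγ.2 i h)
        rw [Finset.prod_cons]
        congr 1
        · simp [addRightEmbedding_apply, hγi]
        · refine Finset.prod_congr rfl fun j hj => ?_
          have : j ≠ i := fun h => hi (h ▸ hj)
          simp [addRightEmbedding_apply, this]
      rw [Finset.sum_congr rfl hterm, ← Finset.mul_sum, ih p.2]
    rw [Finset.sum_congr rfl hp, Finset.Nat.sum_antidiagonal_eq_sum_range_succ_mk]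
    simp only []
    rw [Finset.sum_cons]
    exact vand2 (x i) (∑ j ∈ s, x j) n

lemma poch_half (n : ℕ) :
    ((2*n).factorial : ℝ) = (ascPochhammer ℝ n).eval (1/2) * 4^n * n.factorial := by
  induction n with
  | zero => simp
  | succ n ih =>
    have h2 : 2*(n+1) = (2*n+1)+1 := by ring
    rw [h2, Nat.factorial_succ, show 2*n+1 = (2*n)+1 from rfl, Nat.factorial_succ,
      ascPochhammer_succ_eval, Nat.factorial_succ]
    push_cast
    rw [ih]
    push_cast
    ring

variable {m : ℕ}

noncomputable def psi (u : Euc m) (β : Fin m → ℕ) : ℝ :=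
  Real.sqrt (Nat.multinomial univ β) * ∏ i, u i ^ β i

lemma real_inner_euc (u v : Euc m) : ⟪u, v⟫ = ∑ i, u i * v i := by
  simp [PiLp.inner_apply, RCLike.inner_apply]
  exact Finset.sum_congr rfl fun _ _ => mul_comm _ _

lemma inner_pow (u v : Euc m) (k : ℕ) :
    (⟪u, v⟫) ^ k = ∑ β ∈ piAntidiag (univ : Finset (Fin m)) k, psi u β * psi v β := by
  rw [real_inner_euc, Finset.sum_pow_eq_sum_piAntidiag]
  refine Finset.sum_congr rfl fun β hβ => ?_
  rw [psi, psi, mul_mul_mul_comm, Real.mul_self_sqrt (Nat.cast_nonneg _),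
    ← Finset.prod_mul_distrib]
  simp_rw [mul_pow]

lemma sum_inner_pow_eq {B : ℕ} (k : ℕ) (v : Fin B → Euc m) :
    ∑ i, ∑ j, (⟪v i, v j⟫) ^ k
      = ∑ β ∈ piAntidiag (univ : Finset (Fin m)) k, (∑ i, psi (v i) β)^2 := by
  simp_rw [inner_pow, sq, Finset.sum_mul_sum]
  rw [Finset.sum_congr rfl (fun i (_ : i ∈ (univ : Finset (Fin B))) => Finset.sum_comm)]
  exact Finset.sum_comm

lemma Q_nonneg {B : ℕ} (k : ℕ) (v : Fin B → Euc m) :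
    0 ≤ ∑ i, ∑ j, (⟪v i, v j⟫) ^ k := by
  rw [sum_inner_pow_eq]
  exact Finset.sum_nonneg fun β _ => sq_nonneg _

lemma sum_even_piAntidiag (n : ℕ) (f : (Fin m → ℕ) → ℝ) :
    ∑ β ∈ (piAntidiag (univ : Finset (Fin m)) (2*n)).filter (fun β => ∀ i, 2 ∣ β i), f β
      = ∑ γ ∈ piAntidiag (univ : Finset (Fin m)) n, f (2 • γ) := by
  have h := Finset.map_nsmul_piAntidiag_univ (ι := Fin m) n (show (2:ℕ) ≠ 0 by norm_num)
  rw [Finset.filter_congr_decidable] at h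
  rw [← h, Finset.sum_map]
  rfl

lemma half_two_smul (γ : Fin m → ℕ) : (fun i => (2 • γ) i / 2) = γ := by
  funext i
  simp [Nat.mul_div_cancel_left]

lemma cross {u : Euc m} (hu : ⟪u, u⟫ = 1) (n : ℕ) :
    ∑ β ∈ piAntidiag (univ : Finset (Fin m)) (2*n),
      psi u β * (if ∀ i, 2 ∣ β i then
          ((Nat.multinomial univ (fun i => β i / 2) : ℝ) / Real.sqrt (Nat.multinomial univ β))
        else 0) = 1 := by
  simp_rw [mul_ite, mul_zero]
  rw [← Finset.sum_filter, sum_even_piAntidiag]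
  have hterm : ∀ γ ∈ piAntidiag (univ : Finset (Fin m)) n,
      psi u (2 • γ) * ((Nat.multinomial univ (fun i => (2 • γ) i / 2) : ℝ)
          / Real.sqrt (Nat.multinomial univ (2 • γ)))
      = (Nat.multinomial univ γ : ℝ) * ∏ i, (u i ^ 2) ^ γ i := by
    intro γ hγ
    have hM : (0:ℝ) < (Nat.multinomial univ (2 • γ) : ℝ) := by
      exact_mod_cast Nat.multinomial_pos _ _
    have hsq : Real.sqrt (Nat.multinomial univ (2 • γ)) ≠ 0 := by positivity
    rw [half_two_smul, psi]
    have hmono : (∏ i, u i ^ (2 • γ) i) = ∏ i, (u i ^ 2) ^ γ i := by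
      refine Finset.prod_congr rfl fun i _ => ?_
      rw [Pi.smul_apply, smul_eq_mul, pow_mul]
    rw [hmono]
    calc Real.sqrt (Nat.multinomial univ (2 • γ)) * (∏ i, (u i ^ 2) ^ γ i) *
          ((Nat.multinomial univ γ : ℝ) / Real.sqrt (Nat.multinomial univ (2 • γ)))
        = (Nat.multinomial univ γ : ℝ) * (∏ i, (u i ^ 2) ^ γ i) *
            (Real.sqrt (Nat.multinomial univ (2 • γ)) / Real.sqrt (Nat.multinomial univ (2 • γ))) := by
          ring
      _ = (Nat.multinomial univ γ : ℝ) * ∏ i, (u i ^ 2) ^ γ i := by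
          rw [div_self hsq, mul_one]
  rw [Finset.sum_congr rfl hterm, ← Finset.sum_pow_eq_sum_piAntidiag]
  have h2 : (∑ i, u i ^ 2 : ℝ) = 1 := by
    rw [real_inner_euc] at hu
    simpa [sq] using hu
  rw [h2, one_pow]

lemma gsq (n : ℕ) :
    ∑ β ∈ piAntidiag (univ : Finset (Fin m)) (2*n),
      (if ∀ i, 2 ∣ β i then
          ((Nat.multinomial univ (fun i => β i / 2) : ℝ) / Real.sqrt (Nat.multinomial univ β))
        else 0)^2
    = ∑ γ ∈ piAntidiag (univ : Finset (Fin m)) n,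
        (Nat.multinomial univ γ : ℝ)^2 / (Nat.multinomial univ (2 • γ) : ℝ) := by
  have hite : ∀ (c : Prop) [Decidable c] (a : ℝ), (if c then a else 0)^2 = if c then a^2 else 0 := by
    intro c _ a; split <;> simp
  simp_rw [hite]
  rw [← Finset.sum_filter, sum_even_piAntidiag]
  refine Finset.sum_congr rfl fun γ hγ => ?_
  rw [half_two_smul, div_pow, Real.sq_sqrt (Nat.cast_nonneg _)]

lemma Sval (n : ℕ) :
    ∑ γ ∈ piAntidiag (univ : Finset (Fin m)) n,
        (Nat.multinomial univ γ : ℝ)^2 / (Nat.multinomial univ (2 • γ) : ℝ)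
      = (ascPochhammer ℝ n).eval ((m:ℝ)/2) / (ascPochhammer ℝ n).eval (1/2) := by
  have hterm : ∀ γ ∈ piAntidiag (univ : Finset (Fin m)) n,
      (Nat.multinomial univ γ : ℝ)^2 / (Nat.multinomial univ (2 • γ) : ℝ)
        = ((n.factorial:ℝ)^2 * 4^n / ((2*n).factorial)) * ∏ i, aP (γ i) (1/2) := by
    intro γ hγ
    rw [Finset.mem_piAntidiag] at hγ
    have hsum : ∑ i, γ i = n := hγ.1
    have hFpos : (0:ℝ) < ∏ i, ((γ i).factorial : ℝ) :=
      Finset.prod_pos fun i _ => by positivity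
    have hNspec : (∏ i, ((γ i).factorial : ℝ)) * (Nat.multinomial univ γ : ℝ)
        = (n.factorial : ℝ) := by
      have h := Nat.multinomial_spec (univ : Finset (Fin m)) γ
      rw [hsum] at h
      exact_mod_cast congrArg (fun x : ℕ => (x:ℝ)) h
    have hsum2 : ∑ i, (2 • γ) i = 2*n := by
      simp only [Pi.smul_apply, smul_eq_mul]
      rw [← Finset.mul_sum, hsum]
    have hF2pos : (0:ℝ) < ∏ i, (((2 • γ) i).factorial : ℝ) :=
      Finset.prod_pos fun i _ => by positivity
    have hMspec : (∏ i, (((2 • γ) i).factorial : ℝ)) * (Nat.multinomial univ (2 • γ) : ℝ)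
        = ((2*n).factorial : ℝ) := by
      have h := Nat.multinomial_spec (univ : Finset (Fin m)) (2 • γ)
      rw [hsum2] at h
      exact_mod_cast congrArg (fun x : ℕ => (x:ℝ)) h
    have hPpos : 0 < ∏ i, aP (γ i) (1/2) := Finset.prod_pos fun i _ => by
      have h1 := poch_pos (show (0:ℝ) < 1/2 by norm_num) (γ i)
      have h2 : (0:ℝ) < (Nat.factorial (γ i) : ℝ) := by positivity
      exact div_pos h1 h2
    have hF2eq : (∏ i, (((2 • γ) i).factorial : ℝ))
        = (∏ i, aP (γ i) (1/2)) * 4^n * (∏ i, ((γ i).factorial : ℝ))^2 := by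
      have hper : ∀ i : Fin m, (((2 • γ) i).factorial : ℝ)
          = aP (γ i) (1/2) * 4^(γ i) * ((γ i).factorial : ℝ)^2 := by
        intro i
        have hph := poch_half (γ i)
        have hfp : (0:ℝ) < (Nat.factorial (γ i) : ℝ) := by positivity
        rw [Pi.smul_apply, smul_eq_mul, hph, aP]
        field_simp
      rw [Finset.prod_congr rfl fun i _ => hper i, Finset.prod_mul_distrib,
        Finset.prod_mul_distrib, Finset.prod_pow_eq_pow_sum, hsum, ← Finset.prod_pow]
    have hfn : (0:ℝ) < (n.factorial : ℝ) := by positivity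
    have hf2n : (0:ℝ) < ((2*n).factorial : ℝ) := by positivity
    have hN : (Nat.multinomial univ γ : ℝ) = (n.factorial : ℝ) / ∏ i, ((γ i).factorial : ℝ) :=
      (eq_div_iff (ne_of_gt hFpos)).mpr (by linarith)
    have hM : (Nat.multinomial univ (2 • γ) : ℝ)
        = ((2*n).factorial : ℝ) / ∏ i, (((2 • γ) i).factorial : ℝ) :=
      (eq_div_iff (ne_of_gt hF2pos)).mpr (by linarith)
    rw [hN, hM, hF2eq]
    have hPne : (∏ i, aP (γ i) (1/2)) ≠ 0 := ne_of_gt hPpos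
    have hFne : (∏ i, ((γ i).factorial : ℝ)) ≠ 0 := ne_of_gt hFpos
    have hf2ne : ((2*n).factorial : ℝ) ≠ 0 := ne_of_gt hf2n
    field_simp
  rw [Finset.sum_congr rfl hterm, ← Finset.mul_sum]
  have hvdm := vandm (univ : Finset (Fin m)) (fun _ => (1/2 : ℝ)) n
  rw [hvdm]
  have hcard : (∑ _i ∈ (univ : Finset (Fin m)), (1/2 : ℝ)) = (m:ℝ)/2 := by
    rw [Finset.sum_const, Finset.card_univ, Fintype.card_fin, nsmul_eq_mul]
    ring
  rw [hcard]
  rw [aP]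
  have hph := poch_half n
  have h12 := poch_pos (show (0:ℝ) < 1/2 by norm_num) n
  have hfn : (0:ℝ) < (n.factorial : ℝ) := by positivity
  rw [hph]
  field_simp

lemma key_even {B : ℕ} (n : ℕ) (hm1 : 1 ≤ m) (v : Fin B → Euc m)
    (hv : ∀ i, ⟪v i, v i⟫ = 1) :
    (B:ℝ)^2 * ((ascPochhammer ℝ n).eval (1/2) / (ascPochhammer ℝ n).eval ((m:ℝ)/2))
      ≤ ∑ i, ∑ j, (⟪v i, v j⟫) ^ (2*n) := by
  have hmpos : (0:ℝ) < (m:ℝ)/2 := by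
    have : (0:ℝ) < (m:ℝ) := by exact_mod_cast hm1
    linarith
  have hpochm := poch_pos hmpos n
  have hpoch2 := poch_pos (show (0:ℝ) < 1/2 by norm_num) n
  have hS : (∑ γ ∈ piAntidiag (univ : Finset (Fin m)) n,
      (Nat.multinomial univ γ : ℝ)^2 / (Nat.multinomial univ (2 • γ) : ℝ))
      = (ascPochhammer ℝ n).eval ((m:ℝ)/2) / (ascPochhammer ℝ n).eval (1/2) := Sval n
  have hSpos : 0 < ∑ γ ∈ piAntidiag (univ : Finset (Fin m)) n,
      (Nat.multinomial univ γ : ℝ)^2 / (Nat.multinomial univ (2 • γ) : ℝ) := by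
    rw [hS]; exact div_pos hpochm hpoch2
  set S : ℝ := ∑ γ ∈ piAntidiag (univ : Finset (Fin m)) n,
      (Nat.multinomial univ γ : ℝ)^2 / (Nat.multinomial univ (2 • γ) : ℝ)
  set c : ℝ := (B:ℝ) / S with hc
  have hkey : 0 ≤ ∑ β ∈ piAntidiag (univ : Finset (Fin m)) (2*n),
      ((∑ i, psi (v i) β) - c * (if ∀ i, 2 ∣ β i then
          ((Nat.multinomial univ (fun i => β i / 2) : ℝ) / Real.sqrt (Nat.multinomial univ β))
        else 0))^2 := Finset.sum_nonneg fun β _ => sq_nonneg _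
  have hexp : ∑ β ∈ piAntidiag (univ : Finset (Fin m)) (2*n),
      ((∑ i, psi (v i) β) - c * (if ∀ i, 2 ∣ β i then
          ((Nat.multinomial univ (fun i => β i / 2) : ℝ) / Real.sqrt (Nat.multinomial univ β))
        else 0))^2
      = (∑ β ∈ piAntidiag (univ : Finset (Fin m)) (2*n), (∑ i, psi (v i) β)^2)
        - 2*c*(∑ β ∈ piAntidiag (univ : Finset (Fin m)) (2*n), (∑ i, psi (v i) β)
            * (if ∀ i, 2 ∣ β i then
              ((Nat.multinomial univ (fun i => β i / 2) : ℝ) / Real.sqrt (Nat.multinomial univ β))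
            else 0))
        + c^2 * (∑ β ∈ piAntidiag (univ : Finset (Fin m)) (2*n), (if ∀ i, 2 ∣ β i then
              ((Nat.multinomial univ (fun i => β i / 2) : ℝ) / Real.sqrt (Nat.multinomial univ β))
            else 0)^2) := by
    rw [Finset.mul_sum, Finset.mul_sum, ← Finset.sum_sub_distrib, ← Finset.sum_add_distrib]
    exact Finset.sum_congr rfl fun β _ => by ring
  have hFG : ∑ β ∈ piAntidiag (univ : Finset (Fin m)) (2*n), (∑ i, psi (v i) β)
      * (if ∀ i, 2 ∣ β i then
        ((Nat.multinomial univ (fun i => β i / 2) : ℝ) / Real.sqrt (Nat.multinomial univ β))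
      else 0) = B := by
    simp_rw [Finset.sum_mul]
    rw [Finset.sum_comm, Finset.sum_congr rfl fun i (_ : i ∈ (univ : Finset (Fin B)))
      => cross (hv i) n]
    simp
  have hGG : ∑ β ∈ piAntidiag (univ : Finset (Fin m)) (2*n), (if ∀ i, 2 ∣ β i then
        ((Nat.multinomial univ (fun i => β i / 2) : ℝ) / Real.sqrt (Nat.multinomial univ β))
      else 0)^2 = S := gsq n
  rw [hexp, hFG, hGG] at hkey
  rw [sum_inner_pow_eq (2*n) v]
  have hQ : (B:ℝ)^2 / S ≤ ∑ β ∈ piAntidiag (univ : Finset (Fin m)) (2*n),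
      (∑ i, psi (v i) β)^2 := by
    have hcS : c^2 * S = (B:ℝ)^2 / S := by
      rw [hc]; field_simp
    have hcB : 2*c*(B:ℝ) = 2*(B:ℝ)^2/S := by
      rw [hc]; field_simp
    rw [hcS, hcB] at hkey
    have : 2*(B:ℝ)^2/S - (B:ℝ)^2/S = (B:ℝ)^2/S := by ring
    linarith
  refine le_trans (le_of_eq ?_) hQ
  rw [hS]
  field_simp

lemma aseq_bound : ∀ N : ℕ, 0 ≤ aP N (1/2) ∧ (aP N (1/2))^2 * (2*N+1) ≤ 1 := by
  intro N
  induction N with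
  | zero => refine ⟨by simp [aP_zero], by simp [aP_zero]⟩
  | succ N ih =>
    obtain ⟨h0, h1⟩ := ih
    have hN1 : (0:ℝ) < ((N:ℝ)+1) := by positivity
    have hrec : aP (N+1) (1/2) = (1/2 + N) / (N+1) * aP N (1/2) := by
      have h := aP_succ_mul N (1/2)
      field_simp at h ⊢
      linarith
    constructor
    · rw [hrec]
      exact mul_nonneg (div_nonneg (by positivity) (by positivity)) h0
    · rw [hrec]
      push_cast
      rw [mul_pow, div_pow, div_mul_eq_mul_div, div_mul_eq_mul_div,
        div_le_one (by positivity)]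
      nlinarith [mul_le_mul_of_nonneg_left h1 (sq_nonneg ((N:ℝ)+1)),
        sq_nonneg (aP N (1/2))]

lemma cp_lt_inv (hm : 2 ≤ m) {B : ℕ} (hB : 1 ≤ B) :
    (ascPochhammer ℝ (B^2)).eval (1/2) / (ascPochhammer ℝ (B^2)).eval ((m:ℝ)/2)
      < 1/(B:ℝ) := by
  have hm2 : (1:ℝ) ≤ (m:ℝ)/2 := by
    have : (2:ℝ) ≤ (m:ℝ) := by exact_mod_cast hm
    linarith
  have hfac := factorial_le_poch hm2 (B^2)
  have hp2 := poch_pos (show (0:ℝ) < 1/2 by norm_num) (B^2)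
  have hpm := poch_pos (show (0:ℝ) < (m:ℝ)/2 by linarith) (B^2)
  have hNfac : (0:ℝ) < ((B^2).factorial : ℝ) := by positivity
  have h1 : (ascPochhammer ℝ (B^2)).eval (1/2) / (ascPochhammer ℝ (B^2)).eval ((m:ℝ)/2)
      ≤ aP (B^2) (1/2) := by
    rw [aP]
    exact div_le_div_of_nonneg_left hp2.le hNfac hfac
  obtain ⟨h0, hsq⟩ := aseq_bound (B^2)
  have hBpos : (0:ℝ) < (B:ℝ) := by exact_mod_cast hB
  have hcast : ((B^2 : ℕ) : ℝ) = (B:ℝ)^2 := by push_cast; ring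
  rw [hcast] at hsq
  have hlt : aP (B^2) (1/2) < 1/(B:ℝ) := by
    by_contra hcon
    push_neg at hcon
    have hb1 : (1:ℝ) ≤ aP (B^2) (1/2) * (B:ℝ) := (div_le_iff₀ hBpos).mp hcon
    have hb2 : (1:ℝ) ≤ (aP (B^2) (1/2) * (B:ℝ))^2 := by nlinarith
    nlinarith [hb2, hsq, sq_nonneg (aP (B^2) (1/2))]
  exact lt_of_le_of_lt h1 hlt

lemma Q_diag_ge {B : ℕ} (N : ℕ) (v : Fin B → Euc m)
    (hv : ∀ i, ⟪v i, v i⟫ = 1) :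
    (B:ℝ) ≤ ∑ i, ∑ j, (⟪v i, v j⟫) ^ (2*N) := by
  have h1 : ∀ i j, (0:ℝ) ≤ ⟪v i, v j⟫^(2*N) := fun i j => by
    rw [pow_mul]
    exact pow_nonneg (sq_nonneg _) N
  have h2 : ∀ i : Fin B, (1:ℝ) ≤ ∑ j, ⟪v i, v j⟫^(2*N) := by
    intro i
    calc (1:ℝ) = ⟪v i, v i⟫^(2*N) := by rw [hv i, one_pow]
      _ ≤ ∑ j, ⟪v i, v j⟫^(2*N) :=
          Finset.single_le_sum (f := fun j => ⟪v i, v j⟫^(2*N))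
            (fun j _ => h1 i j) (Finset.mem_univ i)
  calc (B:ℝ) = ∑ _i : Fin B, (1:ℝ) := by simp
    _ ≤ _ := Finset.sum_le_sum fun i _ => h2 i

lemma Q_le_sq {B : ℕ} (k : ℕ) (v : Fin B → Euc m) (hv : ∀ i, ‖v i‖ = 1) :
    ∑ i, ∑ j, (⟪v i, v j⟫) ^ k ≤ (B:ℝ)^2 := by
  have hb : ∀ i j : Fin B, (⟪v i, v j⟫)^k ≤ 1 := by
    intro i j
    have habs : |⟪v i, v j⟫| ≤ 1 := by
      have h := abs_real_inner_le_norm (v i) (v j)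
      rw [hv i, hv j] at h
      simpa using h
    calc (⟪v i, v j⟫)^k ≤ |(⟪v i, v j⟫)^k| := le_abs_self _
      _ = |⟪v i, v j⟫|^k := by rw [abs_pow]
      _ ≤ 1^k := pow_le_pow_left₀ (abs_nonneg _) habs k
      _ = 1 := one_pow k
  calc ∑ i, ∑ j, (⟪v i, v j⟫)^k ≤ ∑ _i : Fin B, ∑ _j : Fin B, (1:ℝ) :=
        Finset.sum_le_sum fun i _ => Finset.sum_le_sum fun j _ => hb i j
    _ = (B:ℝ)^2 := by simp [sq]

lemma main_lt {B : ℕ} (hm : 2 ≤ m) (hB : 1 < B) (t : ℝ) (ht : 0 < t)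
    (v : Fin B → Euc m) (hv : ∀ i, ‖v i‖ = 1) :
    (B:ℝ)^2 * hyp0F1 ((m:ℝ)/2) (t^2) < ∑ i, ∑ j, Real.exp (2*t*⟪v i, v j⟫) := by
  have hm1 : 1 ≤ m := le_trans (by norm_num) hm
  have hvinner : ∀ i, ⟪v i, v i⟫ = 1 := by
    intro i
    rw [real_inner_self_eq_norm_sq, hv i, one_pow]
  -- series terms
  set g : ℕ → ℝ := fun k => (2*t)^k * (∑ i, ∑ j, (⟪v i, v j⟫) ^ k) / k.factorial with hgdef
  set h : ℕ → ℝ := fun k => if 2 ∣ k then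
      (B:ℝ)^2 * (2*t)^k * ((ascPochhammer ℝ (k/2)).eval (1/2)
        / (ascPochhammer ℝ (k/2)).eval ((m:ℝ)/2)) / k.factorial
    else 0 with hhdef
  have htpos : (0:ℝ) < 2*t := by linarith
  have hBpos : (0:ℝ) < (B:ℝ) := by exact_mod_cast (by omega : 0 < B)
  -- nonnegativity
  have hg_nonneg : ∀ k, 0 ≤ g k := by
    intro k
    apply div_nonneg _ (by positivity)
    exact mul_nonneg (by positivity) (Q_nonneg k v)
  have hmr : (0:ℝ) < (m:ℝ) := by exact_mod_cast (by omega : 0 < m)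
  have hh_nonneg : ∀ k, 0 ≤ h k := by
    intro k
    rw [hhdef]
    dsimp only
    split
    · have p1 := poch_pos (show (0:ℝ) < 1/2 by norm_num) (k/2)
      have p2 := poch_pos (show (0:ℝ) < (m:ℝ)/2 by linarith) (k/2)
      positivity
    · exact le_refl 0
  -- Step A
  have hexp_eq : ∀ x : ℝ, Real.exp x = ∑' k : ℕ, x^k / k.factorial := by
    intro x
    rw [Real.exp_eq_exp_ℝ, NormedSpace.exp_eq_tsum_div]
  have hsumm_base : ∀ x : ℝ, Summable (fun k : ℕ => x^k / (k.factorial : ℝ)) :=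
    fun x => Real.summable_pow_div_factorial x
  have hA : ∑ i, ∑ j, Real.exp (2*t*⟪v i, v j⟫) = ∑' k, g k := by
    calc ∑ i, ∑ j, Real.exp (2*t*⟪v i, v j⟫)
        = ∑ p ∈ (univ : Finset (Fin B)) ×ˢ (univ : Finset (Fin B)),
            ∑' k : ℕ, (2*t*⟪v p.1, v p.2⟫)^k / k.factorial := by
          rw [Finset.sum_product]
          exact Finset.sum_congr rfl fun i _ => Finset.sum_congr rfl fun j _ => hexp_eq _
      _ = ∑' k : ℕ, ∑ p ∈ (univ : Finset (Fin B)) ×ˢ (univ : Finset (Fin B)),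
            (2*t*⟪v p.1, v p.2⟫)^k / k.factorial :=
          (Summable.tsum_finsetSum fun p _ => hsumm_base _).symm
      _ = ∑' k, g k := by
          refine tsum_congr fun k => ?_
          rw [Finset.sum_product, hgdef]
          dsimp only
          simp_rw [mul_pow, mul_div_assoc, ← Finset.mul_sum, ← mul_div_assoc,
            ← Finset.sum_div]
          rw [mul_div_assoc]
  -- Step C : pointwise bound
  have hle : ∀ k, h k ≤ g k := by
    intro k
    rw [hhdef, hgdef]
    dsimp only
    split
    case isTrue hdvd =>
      obtain ⟨n, rfl⟩ := hdvd
      rw [Nat.mul_div_cancel_left n (by norm_num)]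
      have hkey := key_even (B := B) n hm1 v hvinner
      have hfac : (0:ℝ) < ((2*n).factorial : ℝ) := by positivity
      have h2 : (B:ℝ)^2 * (2*t)^(2*n) * ((ascPochhammer ℝ n).eval (1/2)
          / (ascPochhammer ℝ n).eval ((m:ℝ)/2))
          ≤ (2*t)^(2*n) * ∑ i, ∑ j, (⟪v i, v j⟫) ^ (2*n) := by
        nlinarith [mul_nonneg (pow_nonneg htpos.le (2*n)) (sub_nonneg.mpr hkey)]
      exact (div_le_div_iff_of_pos_right hfac).mpr h2
    case isFalse _ =>
      exact div_nonneg (mul_nonneg (by positivity) (Q_nonneg _ v)) (by positivity)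
  -- Step D : strict inequality at 2*B^2
  have hstrict : h (2*B^2) < g (2*B^2) := by
    rw [hhdef, hgdef]
    dsimp only
    rw [if_pos (show (2:ℕ) ∣ 2*B^2 from ⟨B^2, rfl⟩), Nat.mul_div_cancel_left _ (by norm_num)]
    have hdiag := Q_diag_ge (B := B) (B^2) v hvinner
    have hcp := cp_lt_inv hm (by omega : 1 ≤ B)
    have hfac : (0:ℝ) < ((2*B^2).factorial : ℝ) := by positivity
    have hpow : (0:ℝ) < (2*t)^(2*B^2) := pow_pos htpos _
    apply (div_lt_div_iff_of_pos_right hfac).mpr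
    have h1 : (B:ℝ)^2 * ((ascPochhammer ℝ (B^2)).eval (1/2)
        / (ascPochhammer ℝ (B^2)).eval ((m:ℝ)/2)) < (B:ℝ) := by
      have := mul_lt_mul_of_pos_left hcp (show (0:ℝ) < (B:ℝ)^2 by positivity)
      have hBeq : (B:ℝ)^2 * (1/(B:ℝ)) = (B:ℝ) := by field_simp
      linarith [hBeq ▸ this]
    nlinarith [mul_pos hpow (sub_pos.mpr (lt_of_lt_of_le h1 hdiag))]
  -- summability
  have hg_le : ∀ k, g k ≤ (B:ℝ)^2 * ((2*t)^k / k.factorial) := by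
    intro k
    rw [hgdef]
    dsimp only
    have hq := Q_le_sq k v hv
    have hfac : (0:ℝ) < (k.factorial : ℝ) := by positivity
    rw [← mul_div_assoc]
    apply (div_le_div_iff_of_pos_right hfac).mpr
    nlinarith [mul_nonneg (pow_nonneg htpos.le k) (sub_nonneg.mpr hq)]
  have hgsumm : Summable g :=
    Summable.of_nonneg_of_le hg_nonneg hg_le ((hsumm_base (2*t)).mul_left _)
  -- Step B : tsum h
  have hBeq : ∑' k, h k = (B:ℝ)^2 * hyp0F1 ((m:ℝ)/2) (t^2) := by
    rw [hyp0F1, ← tsum_mul_left]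
    have hinj : Function.Injective (fun n : ℕ => 2*n) := fun a b hab => by dsimp at hab; omega
    have hsupp : Function.support h ⊆ Set.range (fun n : ℕ => 2*n) := by
      intro k hk
      rw [Function.mem_support, hhdef] at hk
      dsimp only at hk
      by_cases hdvd : 2 ∣ k
      · exact ⟨k/2, Nat.mul_div_cancel' hdvd⟩
      · exact absurd (if_neg hdvd) hk
    rw [← Function.Injective.tsum_eq hinj hsupp]
    refine tsum_congr fun n => ?_
    rw [hhdef]
    dsimp only
    rw [if_pos (show (2:ℕ) ∣ 2*n from ⟨n, rfl⟩), Nat.mul_div_cancel_left n (by norm_num)]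
    have hph := poch_half n
    have hp2 := poch_pos (show (0:ℝ) < 1/2 by norm_num) n
    have hpm := poch_pos (show (0:ℝ) < (m:ℝ)/2 by linarith) n
    have hfn : (0:ℝ) < (n.factorial : ℝ) := by positivity
    have hpow : (2*t)^(2*n) = 4^n * (t^2)^n := by
      rw [pow_mul, show (2*t)^2 = 4*t^2 by ring, mul_pow]
    rw [hpow, hph]
    field_simp
  -- conclude
  have hfinal : ∑' k, h k < ∑' k, g k :=
    Summable.tsum_lt_tsum_of_nonneg hh_nonneg hle hstrict hgsumm
  rw [hA, ← hBeq]
  exact hfinal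

lemma final_thm (t : ℝ) (ht : 0 < t) {m B : ℕ} (hm : 2 ≤ m) (hB : 1 < B)
    (u : Fin B → Metric.sphere (0 : EuclideanSpace ℝ (Fin m)) 1) :
    Real.log ((1 / (B : ℝ) ^ 2) *
        ∑ i : Fin B, ∑ j : Fin B, Real.exp (-t * ‖(u i : Euc m) - (u j : Euc m)‖ ^ 2)) >
      -2 * t + Real.log (hyp0F1 ((m : ℝ) / 2) (t ^ 2)) := by
  classical
  set v : Fin B → Euc m := fun i => (u i : Euc m) with hvdef
  have hv : ∀ i, ‖v i‖ = 1 := fun i => by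
    have h := (u i).2
    rwa [mem_sphere_zero_iff_norm] at h
  have hmain := main_lt hm hB t ht v hv
  have hmr2 : (1:ℝ) ≤ (m:ℝ)/2 := by
    have : (2:ℝ) ≤ m := by exact_mod_cast hm
    linarith
  have hFsumm : Summable (fun k : ℕ =>
      (t^2)^k / ((ascPochhammer ℝ k).eval ((m:ℝ)/2) * k.factorial)) := by
    apply Summable.of_nonneg_of_le _ _ (Real.summable_pow_div_factorial (t^2))
    · intro k
      have hp := poch_pos (show (0:ℝ) < (m:ℝ)/2 by linarith) k
      positivity
    · intro k
      have hpk := factorial_le_poch hmr2 k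
      have hfpos : (0:ℝ) < (k.factorial : ℝ) := by positivity
      have h1 : (1:ℝ) ≤ (ascPochhammer ℝ k).eval ((m:ℝ)/2) := by
        have : (1:ℝ) ≤ (k.factorial : ℝ) := by exact_mod_cast (Nat.factorial_pos k)
        linarith
      have h2 : (k.factorial : ℝ) ≤ (ascPochhammer ℝ k).eval ((m:ℝ)/2) * k.factorial := by
        nlinarith
      exact div_le_div_of_nonneg_left (by positivity) hfpos h2
  have hF1 : (1:ℝ) ≤ hyp0F1 ((m:ℝ)/2) (t^2) := by
    have h0 : (t^2)^(0:ℕ) / ((ascPochhammer ℝ 0).eval ((m:ℝ)/2) * (Nat.factorial 0 : ℝ))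
        = 1 := by
      simp
    calc (1:ℝ) = (t^2)^(0:ℕ) / ((ascPochhammer ℝ 0).eval ((m:ℝ)/2) * (Nat.factorial 0 : ℝ)) :=
          h0.symm
      _ ≤ hyp0F1 ((m:ℝ)/2) (t^2) := by
          refine Summable.le_tsum hFsumm 0 fun k _ => ?_
          have hp := poch_pos (show (0:ℝ) < (m:ℝ)/2 by linarith) k
          positivity
  have hFpos : (0:ℝ) < hyp0F1 ((m:ℝ)/2) (t^2) := lt_of_lt_of_le one_pos hF1
  have hBr : (0:ℝ) < (B:ℝ) := by exact_mod_cast (by omega : 0 < B)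
  have hterm : ∀ i j : Fin B, Real.exp (-t * ‖v i - v j‖^2)
      = Real.exp (-2*t) * Real.exp (2*t*⟪v i, v j⟫) := by
    intro i j
    rw [← Real.exp_add]
    congr 1
    have hns : ‖v i - v j‖^2 = 2 - 2*⟪v i, v j⟫ := by
      rw [norm_sub_sq_real, hv i, hv j]
      ring
    rw [hns]
    ring
  have hsum_eq : ∑ i, ∑ j, Real.exp (-t * ‖v i - v j‖^2)
      = Real.exp (-2*t) * ∑ i, ∑ j, Real.exp (2*t*⟪v i, v j⟫) := by
    rw [Finset.mul_sum]
    refine Finset.sum_congr rfl fun i _ => ?_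
    rw [Finset.mul_sum]
    exact Finset.sum_congr rfl fun j _ => hterm i j
  show Real.log ((1 / (B : ℝ) ^ 2) * ∑ i, ∑ j, Real.exp (-t * ‖v i - v j‖ ^ 2))
      > -2 * t + Real.log (hyp0F1 ((m : ℝ) / 2) (t ^ 2))
  rw [hsum_eq]
  have hXpos : 0 < ∑ i, ∑ j, Real.exp (2*t*⟪v i, v j⟫) :=
    lt_trans (by positivity) hmain
  have hrw : (1/(B:ℝ)^2) * (Real.exp (-2*t) * ∑ i, ∑ j, Real.exp (2*t*⟪v i, v j⟫))
      = Real.exp (-2*t) * ((∑ i, ∑ j, Real.exp (2*t*⟪v i, v j⟫))/(B:ℝ)^2) := by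
    ring
  rw [hrw, Real.log_mul (Real.exp_ne_zero _) (by positivity), Real.log_exp]
  have hlast : Real.log (hyp0F1 ((m:ℝ)/2) (t^2))
      < Real.log ((∑ i, ∑ j, Real.exp (2*t*⟪v i, v j⟫))/(B:ℝ)^2) := by
    apply Real.log_lt_log hFpos
    rw [lt_div_iff₀ (by positivity : (0:ℝ) < (B:ℝ)^2)]
    calc hyp0F1 ((m:ℝ)/2) (t^2) * (B:ℝ)^2 = (B:ℝ)^2 * hyp0F1 ((m:ℝ)/2) (t^2) := by ring
      _ < _ := hmain
  linarith

end EmpUnif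

/-- Strict lower bound for the empirical (with-diagonal) uniformity quantity:
for any `B > 1` points on the unit sphere of `ℝ^m`,
`log((1/B²) Σ_{i,j} e^{−t‖u_i−u_j‖²}) > −2t + log ₀F₁(;m/2;t²)`. -/
theorem empirical_unif_gt (t : ℝ) (ht : 0 < t) {m B : ℕ} (hm : 2 ≤ m) (hB : 1 < B)
    (u : Fin B → Sph m) :
    Real.log ((1 / (B : ℝ) ^ 2) *
        ∑ i : Fin B, ∑ j : Fin B, Real.exp (-t * ‖(u i : Euc m) - (u j : Euc m)‖ ^ 2)) >
      -2 * t + Real.log (hyp0F1 ((m : ℝ) / 2) (t ^ 2)) := by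
  exact EmpUnif.final_thm t ht hm hB u
end
end
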